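/- arXiv:1707.00650 — 10 statements merged into one kernel-verified Lean document; each statement's English description precedes it below -/
import Mathlib

section
/- Let P be a q^r-divisible multiset of points in a finite-dimensional F_q-vector space V and let U be a subspace of V of codimension j with 0 ≤ j ≤ r. Then the restricted multiset P∩U is q^{r−j}-divisible as a multiset of points in U. -/
open scoped Classical

open Module

/-- The number of 1-dimensional subspaces of a 2-dimensional space over a finite field `F`
is `|F| + 1`. -/
lemma card_lines_aux (F : Type) [Field F] [Fintype F] (Q : Type) [AddCommGroup Q] [Module F Q]
    [FiniteDimensional F Q] (h2 : Module.finrank F Q = 2) :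
    Nat.card {L : Submodule F Q // Module.finrank F ↥L = 1} = Fintype.card F + 1 := by
  have e : Q ≃ₗ[F] (F × F) := LinearEquiv.ofFinrankEq _ _ (by
    rw [h2, finrank_prod, finrank_self])
  have e1 : {L : Submodule F Q // Module.finrank F ↥L = 1} ≃
      {L : Submodule F (F × F) // Module.finrank F ↥L = 1} :=
    Equiv.subtypeEquiv (Submodule.orderIsoMapComap e).toEquiv (fun L => by
      show finrank F ↥L = 1 ↔ finrank F ↥(Submodule.map (↑e : Q →ₗ[F] F × F) L) = 1
      rw [LinearEquiv.finrank_map_eq])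
  rw [Nat.card_congr e1, ← Nat.card_congr (Projectivization.equivSubmodule F (F × F)),
      Projectivization.card_of_finrank_two F (F × F) (by simp), Nat.card_eq_fintype_card]

/-- A multiset of points (1-dimensional subspaces) `P` in an ambient `F`-vector space `V`
is `q^r`-divisible if all its members are 1-dimensional and for every hyperplane `H`
the cardinality of the restriction `P ∩ H` is congruent to the cardinality of `P`
modulo `q^r`, where `q = Fintype.card F`. -/
def IsDivisible (F : Type) [Field F] [Fintype F] {V : Type} [AddCommGroup V] [Module F V]
    (r : ℕ) (P : Multiset (Submodule F V)) : Prop :=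
  (∀ X ∈ P, Module.finrank F ↥X = 1) ∧
  ∀ H : Submodule F V, Module.finrank F ↥H + 1 = Module.finrank F V →
    Multiset.card (P.filter (fun X => X ≤ H)) ≡ Multiset.card P [MOD (Fintype.card F) ^ r]

/-- Restriction of a `q^r`-divisible multiset of points to a subspace `U` of codimension
`j ≤ r` is `q^(r-j)`-divisible as a multiset of points in `U`. -/
theorem restriction_divisible (F : Type) [Field F] [Fintype F] (V : Type) [AddCommGroup V]
    [Module F V] [FiniteDimensional F V] (r j : ℕ) (hjr : j ≤ r)
    (P : Multiset (Submodule F V)) (hP : IsDivisible F r P)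
    (U : Submodule F V) (hU : Module.finrank F ↥U + j = Module.finrank F V)
    (W : Submodule F V) (hWU : W ≤ U)
    (hW : Module.finrank F ↥W + 1 = Module.finrank F ↥U) :
    Multiset.card (P.filter (fun X => X ≤ W)) ≡
      Multiset.card (P.filter (fun X => X ≤ U)) [MOD (Fintype.card F) ^ (r - j)] := by
  haveI : Finite V := Module.finite_of_finite F
  simp only [← Multiset.countP_eq_card_filter]
  set q := Fintype.card F with hq
  have hq1 : 1 ≤ q := Fintype.card_pos
  induction j generalizing U W with
  | zero =>
    have hUtop : U = ⊤ := Submodule.eq_top_of_finrank_eq (by omega)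
    subst hUtop
    have h1 : P.countP (fun X => X ≤ (⊤ : Submodule F V)) = Multiset.card P := by
      rw [Multiset.countP_eq_card_filter, Multiset.filter_eq_self.mpr (fun X _ => le_top)]
    rw [h1, Nat.sub_zero, Multiset.countP_eq_card_filter]
    exact hP.2 W (by rw [hW, finrank_top])
  | succ j ih =>
    -- find U' with U a hyperplane of U'
    have hex : ∃ v, v ∉ U := by
      by_contra hc
      push_neg at hc
      have : U = ⊤ := Submodule.eq_top_iff'.mpr hc
      rw [this, finrank_top] at hU
      omega
    obtain ⟨v, hv⟩ := hex
    have hv0 : v ≠ 0 := fun h => hv (h ▸ U.zero_mem)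
    set U' := U ⊔ Submodule.span F {v} with hU'def
    have hUU' : U ≤ U' := le_sup_left
    have hvU' : v ∈ U' := Submodule.mem_sup_right (Submodule.mem_span_singleton_self v)
    have hUlt : U < U' := lt_of_le_of_ne hUU' (fun h => hv (h ▸ hvU'))
    have hrU' : finrank F ↥U' = finrank F ↥U + 1 := by
      have h1 := Submodule.finrank_sup_add_finrank_inf_eq U (Submodule.span F {v})
      have h2 : finrank F ↥(Submodule.span F {v}) = 1 := finrank_span_singleton hv0
      have h3 : finrank F ↥U < finrank F ↥U' := Submodule.finrank_lt_finrank_of_lt hUlt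
      rw [← hU'def] at h1
      omega
    have hU'codim : finrank F ↥U' + j = finrank F V := by omega
    have hWU' : W ≤ U' := hWU.trans hUU'
    -- the IH applied to (U', U)
    have hIHU : P.countP (fun X => X ≤ U) ≡ P.countP (fun X => X ≤ U') [MOD q ^ (r - j)] :=
      ih (by omega) U' hU'codim U hUU' (by omega)
    -- complement C of W inside U'
    obtain ⟨C₀, hC₀⟩ := Submodule.exists_isCompl (W.comap U'.subtype)
    set C := C₀.map U'.subtype with hCdef
    have hWmap : (W.comap U'.subtype).map U'.subtype = W := by
      rw [Submodule.map_comap_subtype, inf_eq_right.mpr hWU']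
    have hsupWC : W ⊔ C = U' := by
      rw [← hWmap, hCdef, ← Submodule.map_sup, codisjoint_iff.mp hC₀.codisjoint,
        Submodule.map_top, Submodule.range_subtype]
    have hinfWC : W ⊓ C = ⊥ := by
      rw [← hWmap, hCdef, ← Submodule.map_inf _ U'.injective_subtype,
        disjoint_iff.mp hC₀.disjoint, Submodule.map_bot]
    have hCle : C ≤ U' := Submodule.map_subtype_le _ _
    have hrC : finrank F ↥C = 2 := by
      have h1 := Submodule.finrank_sup_add_finrank_inf_eq W C
      rw [hsupWC, hinfWC] at h1
      simp only [finrank_bot] at h1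
      omega
    -- the set of hyperplanes of U' containing W
    set S : Set (Submodule F V) :=
      {H | W ≤ H ∧ H ≤ U' ∧ finrank F ↥H = finrank F ↥W + 1} with hSdef
    have key1 : ∀ H : Submodule F V, H ∈ S → finrank F ↥(H ⊓ C) = 1 ∧ W ⊔ (H ⊓ C) = H := by
      rintro H ⟨h1, h2, h3⟩
      have hWHC : W ⊓ (H ⊓ C) = ⊥ := by rw [← inf_assoc, inf_eq_left.mpr h1, hinfWC]
      have hsup : W ⊔ (H ⊓ C) = H := by
        rw [sup_comm, inf_sup_assoc_of_le _ h1, sup_comm C W, hsupWC, inf_eq_left.mpr h2]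
      refine ⟨?_, hsup⟩
      have h4 := Submodule.finrank_sup_add_finrank_inf_eq W (H ⊓ C)
      rw [hWHC, hsup, finrank_bot] at h4
      omega
    have key2 : ∀ L : Submodule F V, L ≤ C → finrank F ↥L = 1 →
        (W ⊔ L ∈ S ∧ (W ⊔ L) ⊓ C = L) := by
      intro L hLC hL1
      have hWL : W ⊓ L = ⊥ := by
        have h5 : W ⊓ L ≤ W ⊓ C := inf_le_inf_left W hLC
        rw [hinfWC] at h5
        exact le_bot_iff.mp h5
      have h4 := Submodule.finrank_sup_add_finrank_inf_eq W L
      rw [hWL, finrank_bot] at h4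
      refine ⟨⟨le_sup_left, sup_le hWU' (hLC.trans hCle), by omega⟩, ?_⟩
      rw [sup_comm, sup_inf_assoc_of_le _ hLC, hinfWC, sup_bot_eq]
    have e1 : ↥S ≃ {L : Submodule F V // L ≤ C ∧ finrank F ↥L = 1} :=
      { toFun := fun H => ⟨H.1 ⊓ C, inf_le_right, (key1 H.1 H.2).1⟩
        invFun := fun L => ⟨W ⊔ L.1, (key2 L.1 L.2.1 L.2.2).1⟩
        left_inv := fun H => Subtype.ext (key1 H.1 H.2).2
        right_inv := fun L => Subtype.ext (key2 L.1 L.2.1 L.2.2).2 }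
    have e2 : {L : Submodule F V // L ≤ C ∧ finrank F ↥L = 1} ≃
        {L' : Submodule F ↥C // finrank F ↥L' = 1} :=
      { toFun := fun L => ⟨L.1.comap C.subtype, by
          have h := Submodule.map_comap_subtype C L.1
          rw [inf_eq_right.mpr L.2.1] at h
          rw [← Submodule.finrank_map_subtype_eq C, h]
          exact L.2.2⟩
        invFun := fun L' => ⟨L'.1.map C.subtype, Submodule.map_subtype_le _ _, by
          rw [Submodule.finrank_map_subtype_eq]
          exact L'.2⟩
        left_inv := fun L => Subtype.ext (by
          have h := Submodule.map_comap_subtype C L.1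
          rw [inf_eq_right.mpr L.2.1] at h
          exact h)
        right_inv := fun L' =>
          Subtype.ext (Submodule.comap_map_eq_of_injective C.injective_subtype _) }
    have hcardS : Nat.card S = q + 1 := by
      rw [Nat.card_congr (e1.trans e2), card_lines_aux F ↥C hrC]
    have hSfin : S.Finite := Set.toFinite S
    set Sf : Finset (Submodule F V) := hSfin.toFinset with hSfdef
    have hmemSf : ∀ H : Submodule F V, H ∈ Sf ↔ H ∈ S := fun H => hSfin.mem_toFinset
    have hSfcard : Sf.card = q + 1 := by
      rw [← hcardS, Nat.card_coe_set_eq, Set.ncard_eq_toFinset_card _ hSfin]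
    -- pointwise counting
    have hpoint : ∀ X : Submodule F V, finrank F ↥X = 1 →
        (∑ H ∈ Sf, (if X ≤ H then 1 else 0)) =
          Sf.card * (if X ≤ W then 1 else 0) + (if X ≤ U' ∧ ¬ X ≤ W then 1 else 0) := by
      intro X hX
      by_cases hXW : X ≤ W
      · have hall : ∀ H ∈ Sf, (if X ≤ H then (1 : ℕ) else 0) = 1 := fun H hH =>
          if_pos (hXW.trans ((hmemSf H).mp hH).1)
        rw [Finset.sum_congr rfl hall, Finset.sum_const, smul_eq_mul, mul_one]
        simp [hXW]
      · by_cases hXU' : X ≤ U'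
        · -- exactly one hyperplane W ⊔ X
          have hWX : W ⊓ X = ⊥ := by
            have hne : W ⊓ X ≠ X := fun h => hXW (inf_eq_right.mp h)
            have hlt : W ⊓ X < X := lt_of_le_of_ne inf_le_right hne
            have h6 := Submodule.finrank_lt_finrank_of_lt hlt
            exact Submodule.finrank_eq_zero.mp (by omega)
          have h4 := Submodule.finrank_sup_add_finrank_inf_eq W X
          rw [hWX, finrank_bot] at h4
          have hmem : W ⊔ X ∈ Sf := (hmemSf _).mpr ⟨le_sup_left, sup_le hWU' hXU', by omega⟩
          have huniq : ∀ H ∈ Sf, (X ≤ H ↔ H = W ⊔ X) := by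
            intro H hH
            obtain ⟨h1, h2, h3⟩ := (hmemSf H).mp hH
            constructor
            · intro hXH
              exact (Submodule.eq_of_le_of_finrank_eq (sup_le h1 hXH) (by omega)).symm
            · rintro rfl
              exact le_sup_right
          have hfilter : Sf.filter (fun H => X ≤ H) = {W ⊔ X} := by
            ext H
            simp only [Finset.mem_filter, Finset.mem_singleton]
            constructor
            · rintro ⟨hH, hXH⟩
              exact (huniq H hH).mp hXH
            · rintro rfl
              exact ⟨hmem, le_sup_right⟩
          rw [← Finset.card_filter, hfilter]
          simp [hXW, hXU']
        · have hall : ∀ H ∈ Sf, (if X ≤ H then (1 : ℕ) else 0) = 0 := fun H hH =>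
            if_neg (fun hXH => hXU' (hXH.trans ((hmemSf H).mp hH).2.1))
          rw [Finset.sum_congr rfl hall, Finset.sum_const, smul_eq_mul, mul_zero]
          simp [hXW, hXU']
    -- double counting
    have hswap : ∀ M : Multiset (Submodule F V), (∀ X ∈ M, finrank F ↥X = 1) →
        ∑ H ∈ Sf, M.countP (fun X => X ≤ H)
          = Sf.card * M.countP (fun X => X ≤ W) + M.countP (fun X => X ≤ U' ∧ ¬ X ≤ W) := by
      intro M
      induction M using Multiset.induction_on with
      | empty => intro _; simp
      | cons a s ihM =>
        intro hmem
        have ha := hmem a (Multiset.mem_cons_self a s)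
        have hs : ∀ X ∈ s, finrank F ↥X = 1 := fun X hX => hmem X (Multiset.mem_cons_of_mem hX)
        simp only [Multiset.countP_cons]
        rw [Finset.sum_add_distrib, ihM hs, hpoint a ha, Nat.mul_add]
        ring
    have hsplit : ∀ M : Multiset (Submodule F V),
        M.countP (fun X => X ≤ U')
          = M.countP (fun X => X ≤ W) + M.countP (fun X => X ≤ U' ∧ ¬ X ≤ W) := by
      intro M
      induction M using Multiset.induction_on with
      | empty => simp
      | cons a s ihM =>
        simp only [Multiset.countP_cons]
        rw [ihM]
        have : (if a ≤ U' then (1:ℕ) else 0)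
            = (if a ≤ W then (1:ℕ) else 0) + (if a ≤ U' ∧ ¬ a ≤ W then (1:ℕ) else 0) := by
          by_cases h1 : a ≤ W
          · simp [h1, h1.trans hWU']
          · by_cases h2 : a ≤ U' <;> simp [h1, h2]
        omega
    set cW := P.countP (fun X => X ≤ W) with hcW
    set cU := P.countP (fun X => X ≤ U) with hcU
    set cU' := P.countP (fun X => X ≤ U') with hcU'
    set dU := P.countP (fun X => X ≤ U' ∧ ¬ X ≤ W) with hdU
    -- congruences for each hyperplane in Sf
    have hHcong : ∀ H ∈ Sf, P.countP (fun X => X ≤ H) ≡ cU' [MOD q ^ (r - j)] := by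
      intro H hH
      obtain ⟨h1, h2, h3⟩ := (hmemSf H).mp hH
      exact ih (by omega) U' hU'codim H h2 (by omega)
    have hsumcong : (∑ H ∈ Sf, P.countP (fun X => X ≤ H)) ≡ Sf.card * cU' [MOD q ^ (r - j)] := by
      have h7 : Sf.card * cU' = ∑ _H ∈ Sf, cU' := by
        rw [Finset.sum_const, smul_eq_mul]
      rw [h7]
      unfold Nat.ModEq
      rw [Finset.sum_nat_mod, Finset.sum_nat_mod Sf _ (fun _ => cU')]
      congr 1
      exact Finset.sum_congr rfl (fun H hH => hHcong H hH)
    have hql : 0 ≡ q * dU [MOD q ^ (r - j)] := by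
      have h8 := hswap P hP.1
      rw [h8, hSfcard] at hsumcong
      rw [← hcW, ← hdU] at hsumcong
      have h9 : (q + 1) * cU' = ((q + 1) * cW + dU) + q * dU := by
        rw [hcU', hcW, hdU, hsplit P]
        ring
      rw [h9] at hsumcong
      exact (Nat.ModEq.refl ((q + 1) * cW + dU)).add_left_cancel (by rw [add_zero]; exact hsumcong)
    have hdvd : q ^ (r - j - 1) ∣ dU := by
      have h10 : q ^ (r - j) ∣ q * dU := (Nat.modEq_zero_iff_dvd).mp hql.symm
      have hrj : r - j = (r - j - 1) + 1 := by omega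
      rw [hrj, pow_succ, mul_comm (q ^ (r - j - 1)) q] at h10
      exact (Nat.mul_dvd_mul_iff_left (by omega : 0 < q)).mp h10
    have hWcong : cW ≡ cU' [MOD q ^ (r - j - 1)] := by
      have h0 : dU ≡ 0 [MOD q ^ (r - j - 1)] := Nat.modEq_zero_iff_dvd.mpr hdvd
      have h11 := (Nat.ModEq.refl cW).add h0.symm
      rw [add_zero] at h11
      rw [hcU', hsplit P, ← hcW, ← hdU]
      rw [hcW, hdU]
      rw [hcW, hdU] at h11
      exact h11
    have hUcong : cU ≡ cU' [MOD q ^ (r - j - 1)] :=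
      hIHU.of_dvd (pow_dvd_pow q (by omega))
    have hexp : r - (j + 1) = r - j - 1 := by omega
    rw [hexp]
    exact hWcong.trans hUcong.symm
end

section
/- For every prime power q, every r ∈ ℕ, and every i ∈ {0,…,r}, there exists a q^r-divisible multiset of points of cardinality s_q(r,i) := q^i·(q^{r−i+1}−1)/(q−1) = q^i + q^{i+1} + … + q^r; a realization is given by the q^i-fold repetition of all points of an (r−i+1)-dimensional subspace. -/
open scoped Classical

section Aux

variable (F : Type) [Field F] [Fintype F] {V : Type} [AddCommGroup V] [Module F V]
  [Fintype V] [DecidableEq V]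

noncomputable local instance : Fintype (Submodule F V) := Fintype.ofFinite _

/-- geometric sum identity in ℕ -/
lemma aux_geom (q n : ℕ) (hq : 1 ≤ q) :
    (∑ j ∈ Finset.range n, q ^ j) * (q - 1) = q ^ n - 1 := by
  induction n with
  | zero => simp
  | succ n ih =>
    rw [Finset.sum_range_succ, add_mul, ih, pow_succ]
    have h1 : 1 ≤ q ^ n := Nat.one_le_pow _ _ hq
    have h2 : q ^ n ≤ q ^ n * q := Nat.le_mul_of_pos_right _ hq
    have h3 : q ^ n * (q - 1) = q ^ n * q - q ^ n := by
      rw [Nat.mul_sub, mul_one]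
    omega

lemma aux_count (W : Submodule F V) :
    ((Finset.univ.filter (fun X : Submodule F V =>
        Module.finrank F ↥X = 1 ∧ X ≤ W)).card) * (Fintype.card F - 1)
      = Fintype.card F ^ Module.finrank F ↥W - 1 := by
  classical
  set q := Fintype.card F
  have hq : 1 < q := Fintype.one_lt_card
  -- count nonzero vectors of W
  have hB : (Finset.univ.filter (fun v : V => v ∈ W ∧ v ≠ 0)).card
      = q ^ Module.finrank F ↥W - 1 := by
    have e1 : (Finset.univ.filter (fun v : V => v ∈ W ∧ v ≠ 0)).card
        = Fintype.card {v : V // v ∈ W ∧ v ≠ 0} := (Fintype.card_subtype _).symm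
    have e2 : Fintype.card {v : V // v ∈ W ∧ v ≠ 0}
        = Fintype.card {v : W // v ≠ (0 : W)} := by
      apply Fintype.card_congr
      exact ⟨fun x => ⟨⟨x.1, x.2.1⟩, fun h => x.2.2 (by simpa using congrArg Subtype.val h)⟩,
        fun x => ⟨x.1.1, x.1.2, fun h => x.2 (Subtype.ext h)⟩,
        fun x => rfl, fun x => rfl⟩
    have e3 : Fintype.card {v : W // v ≠ (0 : W)} = Fintype.card W - 1 := by
      simp [Fintype.card_subtype_compl]
    rw [e1, e2, e3, Module.card_eq_pow_finrank (K := F) (V := W)]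
  -- fiberwise count
  rw [← hB]
  rw [Finset.card_eq_sum_card_fiberwise
      (f := fun v : V => Submodule.span F {v})
      (t := Finset.univ.filter (fun X : Submodule F V =>
        Module.finrank F ↥X = 1 ∧ X ≤ W))
      (fun v hv => by
        simp only [Finset.mem_filter, Finset.mem_univ, true_and] at hv ⊢
        have hv : v ∈ W ∧ v ≠ 0 := Finset.mem_filter.1
          (hv : v ∈ Finset.univ.filter (fun v : V => v ∈ W ∧ v ≠ 0)) |>.2
        have h : Submodule.span F {v} ∈ Finset.univ.filter (fun X : Submodule F V =>
            Module.finrank F ↥X = 1 ∧ X ≤ W) := Finset.mem_filter.2 ⟨Finset.mem_univ _,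
          finrank_span_singleton hv.2, (Submodule.span_singleton_le_iff_mem _ _).2 hv.1⟩
        exact h)]
  rw [Finset.sum_congr rfl (fun X hX => ?_), Finset.sum_const, smul_eq_mul]
  simp only [Finset.mem_filter, Finset.mem_univ, true_and] at hX
  obtain ⟨hX1, hXW⟩ := hX
  -- fiber over X has q - 1 elements
  have hfib : (Finset.univ.filter (fun v : V => v ∈ W ∧ v ≠ 0)).filter
      (fun v => Submodule.span F {v} = X)
      = Finset.univ.filter (fun v : V => v ∈ X ∧ v ≠ 0) := by
    ext v
    simp only [Finset.mem_filter, Finset.mem_univ, true_and]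
    constructor
    · rintro ⟨⟨hvW, hv0⟩, hsp⟩
      exact ⟨hsp ▸ Submodule.mem_span_singleton_self v, hv0⟩
    · rintro ⟨hvX, hv0⟩
      have hle : Submodule.span F {v} ≤ X := (Submodule.span_singleton_le_iff_mem _ _).2 hvX
      have heq : Submodule.span F {v} = X := by
        apply Submodule.eq_of_le_of_finrank_le hle
        rw [hX1, finrank_span_singleton hv0]
      exact ⟨⟨hXW hvX, hv0⟩, heq⟩
  rw [hfib]
  have e1 : (Finset.univ.filter (fun v : V => v ∈ X ∧ v ≠ 0)).card
      = Fintype.card {v : V // v ∈ X ∧ v ≠ 0} := (Fintype.card_subtype _).symm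
  have e2 : Fintype.card {v : V // v ∈ X ∧ v ≠ 0}
      = Fintype.card {v : X // v ≠ (0 : X)} := by
    apply Fintype.card_congr
    exact ⟨fun x => ⟨⟨x.1, x.2.1⟩, fun h => x.2.2 (by simpa using congrArg Subtype.val h)⟩,
      fun x => ⟨x.1.1, x.1.2, fun h => x.2 (Subtype.ext h)⟩,
      fun x => rfl, fun x => rfl⟩
  have e3 : Fintype.card {v : X // v ≠ (0 : X)} = Fintype.card X - 1 := by
    simp [Fintype.card_subtype_compl]
  rw [e1, e2, e3, Module.card_eq_pow_finrank (K := F) (V := X), hX1, pow_one]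

end Aux

lemma aux_filter_nsmul {α : Type*} (p : α → Prop) [DecidablePred p] (n : ℕ) (s : Multiset α) :
    (n • s).filter p = n • s.filter p := by
  induction n with
  | zero => simp
  | succ n ih => rw [succ_nsmul, succ_nsmul, Multiset.filter_add, ih]


/-- For `0 ≤ i ≤ r` there exists a `q^r`-divisible multiset of points of cardinality
`s_q(r,i) = q^i + q^(i+1) + … + q^r`. -/
theorem exists_divisible_of_card_s (F : Type) [Field F] [Fintype F] (r i : ℕ) (hi : i ≤ r) :
    ∃ (m : ℕ) (P : Multiset (Submodule F (Fin m → F))),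
      IsDivisible F r P ∧
        Multiset.card P = ∑ j ∈ Finset.Icc i r, (Fintype.card F) ^ j := by
  classical
  set q := Fintype.card F with hqdef
  have hq : 1 < q := Fintype.one_lt_card
  set m := r - i + 1 with hm
  set V := (Fin m → F) with hV
  letI : Fintype (Submodule F V) := Fintype.ofFinite _
  set A : Submodule F V → Finset (Submodule F V) :=
    fun W => Finset.univ.filter (fun X : Submodule F V =>
      Module.finrank F ↥X = 1 ∧ X ≤ W) with hA
  -- card of A W
  have hcardA : ∀ W : Submodule F V,
      (A W).card = ∑ j ∈ Finset.range (Module.finrank F ↥W), q ^ j := by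
    intro W
    apply Nat.eq_of_mul_eq_mul_right (Nat.sub_pos_of_lt hq)
    rw [aux_count, aux_geom _ _ hq.le]
  have hfinV : Module.finrank F V = m := Module.finrank_fin_fun F
  have hfintop : Module.finrank F (⊤ : Submodule F V) = m := by
    rw [finrank_top, hfinV]
  refine ⟨m, (q ^ i) • (A ⊤).val, ⟨?_, ?_⟩, ?_⟩
  · intro X hX
    have := (Multiset.mem_nsmul).mp hX |>.2
    rw [Finset.mem_val, hA, Finset.mem_filter] at this
    exact this.2.1
  · intro H hH
    rw [hfinV] at hH
    have hfinH : Module.finrank F ↥H = r - i := by omega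
    have hfilt : ((q ^ i • (A ⊤).val).filter (fun X => X ≤ H)) = q ^ i • (A H).val := by
      rw [aux_filter_nsmul]
      congr 1
      rw [← Finset.filter_val, hA]
      congr 1
      ext X
      simp [Finset.mem_filter, and_assoc]
    rw [hfilt, Multiset.card_nsmul, Multiset.card_nsmul, ← Finset.card_def, ← Finset.card_def,
      hcardA, hcardA, hfintop, hfinH, hm]
    rw [Finset.sum_range_succ, Nat.mul_add, ← pow_add]
    have : i + (r - i) = r := by omega
    rw [this]
    simp [Nat.ModEq, Nat.add_mod_right, ← hqdef]
  · rw [Multiset.card_nsmul, ← Finset.card_def, hcardA, hfintop, Finset.mul_sum]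
    rw [← Finset.Ico_add_one_right_eq_Icc, Finset.sum_Ico_eq_sum_range]
    have : r + 1 - i = m := by omega
    rw [this]
    exact Finset.sum_congr rfl fun j _ => by rw [← pow_add]
end

section
/- Let q ≥ 2 be an integer, r ∈ ℕ, and define s_q(r,i) = (q^{r+1}−q^i)/(q−1) for 0 ≤ i ≤ r. Every integer n admits a unique representation n = Σ_{i=0}^{r} a_i·s_q(r,i) with a_0,…,a_{r−1} ∈ {0,1,…,q−1} and a_r ∈ ℤ. -/
lemma sqr_shift (q : ℕ) (i r : ℕ) :
    ∑ j ∈ Finset.Icc (i + 1) (r + 1), (q : ℤ) ^ j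
      = q * ∑ j ∈ Finset.Icc i r, (q : ℤ) ^ j := by
  rw [← Finset.map_add_right_Icc, Finset.sum_map, Finset.mul_sum]
  simp [pow_succ, mul_comm]

lemma sqr_icc_range (k : ℕ) : Finset.Icc 0 k = Finset.range (k + 1) := by
  ext x; simp [Nat.lt_succ_iff]

/-- For `q ≥ 2` every integer `n` has a unique representation
`n = Σ_{i=0}^r a_i · s_q(r,i)` with `a_0, …, a_(r-1) ∈ {0, …, q-1}` and `a_r ∈ ℤ`,
where `s_q(r,i) = q^i + … + q^r`. (The `S_q(r)`-adic expansion.) -/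
theorem sqr_adic_expansion_existsUnique (q : ℕ) (hq : 2 ≤ q) (r : ℕ) (n : ℤ) :
    ∃! a : Fin (r + 1) → ℤ,
      (∀ i : Fin (r + 1), (i : ℕ) < r → 0 ≤ a i ∧ a i ≤ (q : ℤ) - 1) ∧
      n = ∑ i : Fin (r + 1), a i * ∑ j ∈ Finset.Icc (i : ℕ) r, (q : ℤ) ^ j := by
  have hq0 : (0:ℤ) < q := by positivity
  induction r generalizing n with
  | zero =>
    refine ⟨fun _ => n, ⟨fun i hi => absurd hi (by omega), by simp⟩, ?_⟩
    rintro a ⟨-, ha⟩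
    funext i
    have h0 : i = 0 := Fin.fin_one_eq_zero i
    simp at ha
    rw [h0, ha]
  | succ r ih =>
    set a0 : ℤ := n % q with ha0
    have ha0nn : 0 ≤ a0 := Int.emod_nonneg n (by omega)
    have ha0lt : a0 < q := Int.emod_lt_of_pos n hq0
    have hdvd : (q:ℤ) ∣ n - a0 := Int.dvd_self_sub_of_emod_eq rfl
    set m : ℤ := (n - a0) / q with hm
    have hnm : n = a0 + q * m := by
      rw [hm, Int.mul_ediv_cancel' hdvd]; ring
    set S : ℤ := ∑ j ∈ Finset.Icc 0 r, (q : ℤ) ^ j with hS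
    have h1 : ∑ j ∈ Finset.Icc 0 (r+1), (q:ℤ)^j = 1 + q * S := by
      rw [hS, sqr_icc_range, sqr_icc_range]
      rw [geom_sum_succ]
      ring
    obtain ⟨b, ⟨hb1, hb2⟩, hbu⟩ := ih (m - a0 * S)
    refine ⟨Fin.cases a0 b, ⟨?_, ?_⟩, ?_⟩
    · intro i hi
      induction i using Fin.cases with
      | zero => simpa using ⟨ha0nn, by omega⟩
      | succ j => simpa using hb1 j (by simpa using hi)
    · rw [Fin.sum_univ_succ]
      simp only [Fin.cases_zero, Fin.cases_succ, Fin.val_succ, Fin.val_zero]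
      calc n = a0 + q * m := hnm
        _ = a0 * (1 + q * S) + q * (m - a0 * S) := by ring
        _ = a0 * (1 + q * S)
              + q * ∑ i : Fin (r+1), b i * ∑ j ∈ Finset.Icc (i:ℕ) r, (q:ℤ)^j := by
            rw [← hb2]
        _ = _ := by
            rw [h1]
            congr 1
            rw [Finset.mul_sum]
            exact Finset.sum_congr rfl fun i _ => by rw [sqr_shift q i r]; ring
    · rintro a ⟨ha1, ha2⟩
      have hsum : n = a 0 + q * (a 0 * S
          + ∑ i : Fin (r+1), a i.succ * ∑ j ∈ Finset.Icc (i:ℕ) r, (q:ℤ)^j) := by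
        rw [ha2, Fin.sum_univ_succ]
        simp only [Fin.val_zero, Fin.val_succ]
        rw [h1, show (∑ i : Fin (r+1), a i.succ * ∑ j ∈ Finset.Icc ((i:ℕ)+1) (r+1), (q:ℤ)^j)
            = ∑ i : Fin (r+1), q * (a i.succ * ∑ j ∈ Finset.Icc (i:ℕ) r, (q:ℤ)^j) from
          Finset.sum_congr rfl fun i _ => by rw [sqr_shift q i r]; ring, ← Finset.mul_sum]
        ring
      have ha00 : a 0 = a0 := by
        obtain ⟨h0a, h0b⟩ := ha1 0 (by simp)
        have : n % q = a 0 := by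
          rw [hsum, mul_comm, Int.add_mul_emod_self_right]
          exact Int.emod_eq_of_lt h0a (by omega)
        omega
      have hmid : m - a0 * S = ∑ i : Fin (r+1), a i.succ * ∑ j ∈ Finset.Icc (i:ℕ) r, (q:ℤ)^j := by
        rw [ha00] at hsum
        have hq' : (q:ℤ) ≠ 0 := by omega
        have := mul_left_cancel₀ hq' (by linarith [hnm, hsum] :
          (q:ℤ) * m = q * (a0 * S + ∑ i : Fin (r+1), a i.succ * ∑ j ∈ Finset.Icc (i:ℕ) r, (q:ℤ)^j))
        linarith
      have hbeq : (fun i : Fin (r+1) => a i.succ) = b := by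
        apply hbu
        exact ⟨fun i hi => ha1 i.succ (by simpa using hi), hmid⟩
      funext i
      induction i using Fin.cases with
      | zero => simpa using ha00
      | succ j => simpa using congrFun hbeq j
end

section
/- Let P be a non-empty finite multiset of points (1-dimensional subspaces) in a finite-dimensional F_q-vector space V with dim V ≥ 2. Then there exists a hyperplane H of V with #(P∩H) < #P / q. -/
open scoped Classical

lemma swap_count_aux {α β : Type*} (P : Multiset α) (S : Finset β)
    (r : α → β → Prop) :
    ∑ b ∈ S, Multiset.card (P.filter (fun a => r a b)) =
      (P.map (fun a => (S.filter (fun b => r a b)).card)).sum := by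
  induction P using Multiset.induction_on with
  | empty => simp
  | cons a P ih =>
    simp only [Multiset.filter_cons, Multiset.card_add, Multiset.map_cons, Multiset.sum_cons,
      Finset.sum_add_distrib, ih, apply_ite Multiset.card, Multiset.card_singleton,
      Multiset.card_zero]
    congr 1
    exact (Finset.card_filter _ _).symm

/-- For a non-empty multiset `P` of points in a vector space of dimension at least 2,
there is a hyperplane `H` with `#(P ∩ H) < #P / q`. -/
theorem exists_hyperplane_few_points (F : Type) [Field F] [Fintype F] (V : Type)
    [AddCommGroup V] [Module F V] [FiniteDimensional F V]
    (h2 : 2 ≤ Module.finrank F V)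
    (P : Multiset (Submodule F V)) (hpts : ∀ X ∈ P, Module.finrank F ↥X = 1)
    (hne : P ≠ 0) :
    ∃ H : Submodule F V, Module.finrank F ↥H + 1 = Module.finrank F V ∧
      Multiset.card (P.filter (fun X => X ≤ H)) * Fintype.card F < Multiset.card P := by
  classical
  by_contra hcon
  push_neg at hcon
  set n := Module.finrank F V with hn
  set q := Fintype.card F with hq
  haveI : Finite V := Module.finite_of_finite F
  haveI : Fintype V := Fintype.ofFinite V
  haveI : Finite (Module.Dual F V) := Module.finite_of_finite F
  haveI : Fintype (Module.Dual F V) := Fintype.ofFinite _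
  have hq2 : 2 ≤ q := Fintype.one_lt_card
  have hm : 0 < Multiset.card P := Multiset.card_pos.mpr hne
  have hpow : 0 < q ^ (n - 1) := pow_pos (by omega) _
  have hpown : 0 < q ^ n := pow_pos (by omega) _
  -- the rank of the kernel of a nonzero functional
  have hker : ∀ φ : Module.Dual F V, φ ≠ 0 →
      Module.finrank F ↥(LinearMap.ker φ) + 1 = n := by
    intro φ hφ
    have h1 : Module.finrank F ↥(LinearMap.range φ) + Module.finrank F ↥(LinearMap.ker φ) = n :=
      LinearMap.finrank_range_add_finrank_ker φ
    have h2' : LinearMap.range φ = ⊤ := by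
      rcases eq_bot_or_eq_top (LinearMap.range φ) with h | h
      · exact absurd (LinearMap.range_eq_bot.mp h) hφ
      · exact h
    rw [h2', finrank_top, Module.finrank_self] at h1
    omega
  -- the set of nonzero functionals
  set S : Finset (Module.Dual F V) := Finset.univ.filter (fun φ => φ ≠ 0) with hS
  have hcardDual : Fintype.card (Module.Dual F V) = q ^ n := by
    rw [Module.card_eq_pow_finrank (K := F), Subspace.dual_finrank_eq]
  have hScard : S.card + 1 = q ^ n := by
    have h0 : S = Finset.univ.erase 0 := by
      ext φ; simp [hS]
    rw [h0, Finset.card_erase_of_mem (Finset.mem_univ _), Finset.card_univ, hcardDual]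
    omega
  -- per-point count
  have hcount : ∀ X ∈ P, (S.filter (fun φ => X ≤ LinearMap.ker φ)).card + 1 = q ^ (n - 1) := by
    intro X hX
    have hX1 := hpts X hX
    have hXbot : X ≠ ⊥ := by
      intro h
      rw [h, finrank_bot] at hX1
      omega
    obtain ⟨x, hxX, hx0⟩ := Submodule.exists_mem_ne_zero_of_ne_bot hXbot
    have hXs : Submodule.span F {x} = X := by
      apply Submodule.eq_of_le_of_finrank_le
      · rw [Submodule.span_le, Set.singleton_subset_iff]; exact hxX
      · rw [hX1, finrank_span_singleton hx0]
    have hiff : ∀ φ : Module.Dual F V, X ≤ LinearMap.ker φ ↔ φ x = 0 := by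
      intro φ
      rw [← hXs, Submodule.span_le, Set.singleton_subset_iff]
      simp [LinearMap.mem_ker]
    set K := LinearMap.ker (Module.Dual.eval F V x) with hK
    have hex : Module.Dual.eval F V x ≠ 0 := by
      rw [Ne, Module.eval_apply_eq_zero_iff F x]; exact hx0
    have hk1 : Module.finrank F ↥K + 1 = n := by
      have h1 := LinearMap.finrank_range_add_finrank_ker (Module.Dual.eval F V x)
      have h2' : LinearMap.range (Module.Dual.eval F V x) = ⊤ := by
        rcases eq_bot_or_eq_top (LinearMap.range (Module.Dual.eval F V x)) with h | h
        · exact absurd (LinearMap.range_eq_bot.mp h) hex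
        · exact h
      rw [h2', finrank_top, Module.finrank_self, Subspace.dual_finrank_eq, ← hK] at h1
      omega
    have hcardK : Fintype.card ↥K = q ^ (n - 1) := by
      rw [Module.card_eq_pow_finrank (K := F)]
      congr 1
      omega
    have hfe : S.filter (fun φ => X ≤ LinearMap.ker φ) =
        (Finset.univ.filter (fun φ : Module.Dual F V => φ ∈ K)).erase 0 := by
      ext φ
      simp only [hS, Finset.filter_filter, Finset.mem_filter, Finset.mem_erase, Finset.mem_univ,
        true_and, hiff φ, hK, LinearMap.mem_ker, Module.Dual.eval_apply, and_comm]
    have hcs : (Finset.univ.filter (fun φ : Module.Dual F V => φ ∈ K)).card =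
        Fintype.card ↥K := (Fintype.card_subtype _).symm
    rw [hfe, Finset.card_erase_of_mem (by simp [hK]), hcs, hcardK]
    omega
  -- double counting
  have hswap := swap_count_aux P S (fun X φ => X ≤ LinearMap.ker φ)
  set c := q ^ (n - 1) - 1 with hc
  have hcpos : c + 1 = q ^ (n - 1) := by omega
  have hTmap : (P.map (fun X => (S.filter (fun φ => X ≤ LinearMap.ker φ)).card)).sum
      = Multiset.card P * c := by
    rw [Multiset.map_congr rfl (fun X hX => by have := hcount X hX; omega :
      ∀ X ∈ P, (S.filter (fun φ => X ≤ LinearMap.ker φ)).card = c)]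
    rw [Multiset.map_const', Multiset.sum_replicate, smul_eq_mul]
  have hlb : ∀ φ ∈ S, Multiset.card P ≤
      Multiset.card (P.filter (fun X => X ≤ LinearMap.ker φ)) * q := by
    intro φ hφ
    have hφ0 : φ ≠ 0 := (Finset.mem_filter.mp hφ).2
    exact hcon _ (hker φ hφ0)
  have hsum : S.card * Multiset.card P ≤
      (∑ φ ∈ S, Multiset.card (P.filter (fun X => X ≤ LinearMap.ker φ))) * q := by
    rw [Finset.sum_mul]
    calc S.card * Multiset.card P = ∑ _φ ∈ S, Multiset.card P := by
          rw [Finset.sum_const, smul_eq_mul]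
      _ ≤ _ := Finset.sum_le_sum hlb
  rw [hswap, hTmap] at hsum
  have hqn : q ^ n = (c + 1) * q := by
    rw [hcpos, ← pow_succ]
    congr 1
    omega
  nlinarith [hScard, hsum, hm, hq2, hqn]
end

section
/- Let q ≥ 2 and r ≥ 1 be integers, and s_q(r,i) = q^i + … + q^r. If n = Σ_{i=0}^{r} a_i·s_q(r,i) is the S_q(r)-adic expansion of n and m = n − τ·q^r for some τ ∈ ℤ, then the S_q(r−1)-adic expansion of m is m = Σ_{i=0}^{r−2} a_i·s_q(r−1,i) + (a_{r−1} + q(σ − τ))·q^{r−1}, where σ = Σ_{i=0}^{r} a_i. In particular the leading coefficient of m's S_q(r−1)-adic expansion equals a_{r−1} + q(σ − τ). -/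
lemma shift_sum (q i k : ℕ) :
    ∑ j ∈ Finset.Icc (i+1) (k+1), (q:ℤ)^j = q * ∑ j ∈ Finset.Icc i k, (q:ℤ)^j := by
  rw [show i+1 = 1+i by ring, show k+1 = 1+k by ring, ← Finset.map_add_left_Icc,
    Finset.sum_map, Finset.mul_sum]
  simp [pow_add]

lemma aux_unique (q : ℕ) (hq : 2 ≤ q) : ∀ k : ℕ, ∀ d : Fin (k+1) → ℤ,
    (∀ i : Fin (k+1), (i:ℕ) < k → |d i| ≤ (q:ℤ) - 1) →
    (∑ i : Fin (k+1), d i * ∑ j ∈ Finset.Icc (i:ℕ) k, (q:ℤ)^j) = 0 →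
    ∀ i, d i = 0 := by
  intro k
  induction k with
  | zero =>
    intro d _ hsum i
    fin_cases i
    simpa using hsum
  | succ k ih =>
    intro d hb hsum
    rw [Fin.sum_univ_succ] at hsum
    have hrw : ∀ i : Fin (k+1), d i.succ * ∑ j ∈ Finset.Icc ((i.succ : ℕ)) (k+1), (q:ℤ)^j
        = q * (d i.succ * ∑ j ∈ Finset.Icc (i:ℕ) k, (q:ℤ)^j) := by
      intro i
      rw [Fin.val_succ, shift_sum]; ring
    rw [Finset.sum_congr rfl (fun i _ => hrw i)] at hsum
    have h0 : ∑ j ∈ Finset.Icc ((0:Fin (k+2)) : ℕ) (k+1), (q:ℤ)^j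
        = 1 + q * ∑ j ∈ Finset.Icc 0 k, (q:ℤ)^j := by
      rw [show ((0:Fin (k+2)) : ℕ) = 0 from rfl]
      rw [show (1:ℤ) = (q:ℤ)^0 by ring, ← shift_sum q 0 k]
      rw [show Finset.Icc 0 (k+1) = insert 0 (Finset.Icc (0+1) (k+1)) from by
        ext x; simp; omega, Finset.sum_insert (by simp)]
    rw [h0] at hsum
    rw [← Finset.mul_sum] at hsum
    set A := ∑ j ∈ Finset.Icc 0 k, (q:ℤ)^j with hA
    set B := ∑ i : Fin (k+1), d i.succ * ∑ j ∈ Finset.Icc (i:ℕ) k, (q:ℤ)^j with hB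
    have hd0 : d 0 = 0 := by
      have hdvd : (q:ℤ) ∣ d 0 := ⟨-(d 0 * A + B), by linarith [hsum]⟩
      have hbd : |d 0| ≤ (q:ℤ) - 1 := hb 0 (by simp)
      rcases hdvd with ⟨c, hc⟩
      rcases abs_le.mp hbd with ⟨h1, h2⟩
      have hq' : (2:ℤ) ≤ q := by exact_mod_cast hq
      rcases lt_trichotomy c 0 with h | h | h
      · nlinarith
      · simp [hc, h]
      · nlinarith
    rw [hd0] at hsum
    simp at hsum
    have hB0 : B = 0 := by
      rcases hsum with h | h
      · exfalso; omega
      · exact h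
    have := ih (fun i => d i.succ) (fun i hi => hb i.succ (by simp; omega)) hB0
    intro i
    cases i using Fin.cases with
    | zero => exact hd0
    | succ j => exact this j

lemma part1_lemma (q k : ℕ) (n τ : ℤ) (a : Fin (k+1+1) → ℤ)
    (hn : n = ∑ i : Fin (k+1+1), a i * ∑ j ∈ Finset.Icc (i : ℕ) (k+1), (q : ℤ) ^ j)
    (m : ℤ) (hm : m = n - τ * (q : ℤ) ^ (k+1)) :
    m = (∑ i : Fin k, a ⟨(i:ℕ), by omega⟩ * ∑ j ∈ Finset.Icc (i:ℕ) k, (q:ℤ)^j)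
      + (a ⟨k, by omega⟩ + (q:ℤ) * ((∑ i : Fin (k+1+1), a i) - τ)) * (q:ℤ)^k := by
  have hsplit : ∀ i : Fin (k+2), ∑ j ∈ Finset.Icc (i:ℕ) (k+1), (q:ℤ)^j
      = (∑ j ∈ Finset.Icc (i:ℕ) k, (q:ℤ)^j) + (q:ℤ)^(k+1) := by
    intro i
    exact Finset.sum_Icc_succ_top (by omega) _
  simp only [hsplit] at hn
  have hn2 : n = (∑ i : Fin (k+1+1), a i * ∑ j ∈ Finset.Icc (i:ℕ) k, (q:ℤ)^j)
      + (∑ i : Fin (k+1+1), a i) * (q:ℤ)^(k+1) := by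
    rw [hn, Finset.sum_mul, ← Finset.sum_add_distrib]
    exact Finset.sum_congr rfl (fun i _ => by ring)
  have hlast : (Finset.Icc (k+1) k : Finset ℕ) = ∅ := by
    rw [Finset.Icc_eq_empty]; omega
  have hTk : ∑ j ∈ Finset.Icc k k, (q:ℤ)^j = (q:ℤ)^k := by simp
  have hsum2 : (∑ i : Fin (k+1+1), a i * ∑ j ∈ Finset.Icc (i:ℕ) k, (q:ℤ)^j)
      = (∑ i : Fin k, a ⟨(i:ℕ), by omega⟩ * ∑ j ∈ Finset.Icc (i:ℕ) k, (q:ℤ)^j)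
        + a ⟨k, by omega⟩ * (q:ℤ)^k := by
    rw [Fin.sum_univ_castSucc, Fin.sum_univ_castSucc]
    simp only [Fin.coe_castSucc, Fin.val_last, hlast, Finset.sum_empty, mul_zero, add_zero, hTk]
    congr 1
  rw [hm, hn2, hsum2]
  ring

lemma part2_lemma (q : ℕ) (hq : 2 ≤ q) (k : ℕ) (τ m : ℤ) (a : Fin (k+1+1) → ℤ)
    (ha : ∀ i : Fin (k+1+1), (i : ℕ) < k+1 → 0 ≤ a i ∧ a i ≤ (q : ℤ) - 1)
    (part1 : m = (∑ i : Fin k, a ⟨(i:ℕ), by omega⟩ * ∑ j ∈ Finset.Icc (i:ℕ) k, (q:ℤ)^j)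
      + (a ⟨k, by omega⟩ + (q:ℤ) * ((∑ i : Fin (k+1+1), a i) - τ)) * (q:ℤ)^k)
    (b : Fin (k+1) → ℤ)
    (hb : ∀ i : Fin (k+1), (i : ℕ) < k → 0 ≤ b i ∧ b i ≤ (q : ℤ) - 1)
    (hmb : m = ∑ i : Fin (k+1), b i * ∑ j ∈ Finset.Icc (i : ℕ) k, (q : ℤ) ^ j) :
    b ⟨k, by omega⟩ = a ⟨k, by omega⟩ + (q : ℤ) * ((∑ i : Fin (k+1+1), a i) - τ) := by
  have hTk : ∑ j ∈ Finset.Icc k k, (q:ℤ)^j = (q:ℤ)^k := by simp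
  obtain ⟨c, hclt, hck⟩ : ∃ c : Fin (k+1) → ℤ,
      (∀ i : Fin (k+1), (i:ℕ) < k → c i = a ⟨(i:ℕ), by omega⟩) ∧
      (c ⟨k, by omega⟩ = a ⟨k, by omega⟩ + (q:ℤ) * ((∑ i : Fin (k+1+1), a i) - τ)) := by
    refine ⟨fun i => if h : (i:ℕ) < k then a ⟨(i:ℕ), by omega⟩
      else a ⟨k, by omega⟩ + (q:ℤ) * ((∑ i : Fin (k+1+1), a i) - τ), ?_, ?_⟩
    · intro i hi; simp only [hi, dif_pos]
    · simp
  have hcsum : (∑ i : Fin (k+1), c i * ∑ j ∈ Finset.Icc (i:ℕ) k, (q:ℤ)^j) = m := by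
    rw [Fin.sum_univ_castSucc, part1]
    congr 1
    · refine Finset.sum_congr rfl (fun i _ => ?_)
      rw [hclt i.castSucc (by simpa using i.isLt)]
      simp only [Fin.coe_castSucc]
    · have hl : (Fin.last k) = (⟨k, Nat.lt_succ_self k⟩ : Fin (k+1)) := by ext; simp
      rw [hl, hck, hTk]
  have hzero : (∑ i : Fin (k+1), (b i - c i) * ∑ j ∈ Finset.Icc (i:ℕ) k, (q:ℤ)^j) = 0 := by
    have h : ∀ i ∈ Finset.univ, (b i - c i) * ∑ j ∈ Finset.Icc (i:ℕ) k, (q:ℤ)^j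
        = b i * (∑ j ∈ Finset.Icc (i:ℕ) k, (q:ℤ)^j) - c i * ∑ j ∈ Finset.Icc (i:ℕ) k, (q:ℤ)^j :=
      fun i _ => by ring
    rw [Finset.sum_congr rfl h, Finset.sum_sub_distrib, hcsum, ← hmb, sub_self]
  have hdb : ∀ i : Fin (k+1), (i:ℕ) < k → |b i - c i| ≤ (q:ℤ) - 1 := by
    intro i hik
    have h1 := hb i hik
    have h2 := ha ⟨(i:ℕ), by omega⟩ (by simpa using by omega)
    rw [hclt i hik, abs_le]
    constructor <;> linarith [h1.1, h1.2, h2.1, h2.2]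
  have hz := aux_unique q hq k _ hdb hzero ⟨k, by omega⟩
  have hbc : b ⟨k, by omega⟩ = c ⟨k, by omega⟩ := by
    have := sub_eq_zero.mp hz
    exact this
  rw [hbc, hck]

/-- If `n = Σ a_i s_q(r,i)` is the `S_q(r)`-adic expansion of `n` with cross sum `σ` and
`m = n - τ q^r`, then `m = Σ_{i≤r-2} a_i s_q(r-1,i) + (a_{r-1} + q(σ - τ)) q^(r-1)`, and this is
the `S_q(r-1)`-adic expansion of `m`: any expansion of `m` has leading coefficient
`a_{r-1} + q(σ - τ)`. -/
theorem expansion_restriction (q : ℕ) (hq : 2 ≤ q) (r : ℕ) (hr : 1 ≤ r) (n τ : ℤ)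
    (a : Fin (r + 1) → ℤ)
    (ha : ∀ i : Fin (r + 1), (i : ℕ) < r → 0 ≤ a i ∧ a i ≤ (q : ℤ) - 1)
    (hn : n = ∑ i : Fin (r + 1), a i * ∑ j ∈ Finset.Icc (i : ℕ) r, (q : ℤ) ^ j)
    (m : ℤ) (hm : m = n - τ * (q : ℤ) ^ r) :
    (m = (∑ i : Fin (r - 1),
          a ⟨(i : ℕ), lt_of_lt_of_le i.isLt (by omega)⟩ *
            ∑ j ∈ Finset.Icc (i : ℕ) (r - 1), (q : ℤ) ^ j) +
        (a ⟨r - 1, by omega⟩ + (q : ℤ) * ((∑ i : Fin (r + 1), a i) - τ)) * (q : ℤ) ^ (r - 1)) ∧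
    ∀ b : Fin r → ℤ, (∀ i : Fin r, (i : ℕ) < r - 1 → 0 ≤ b i ∧ b i ≤ (q : ℤ) - 1) →
      m = ∑ i : Fin r, b i * ∑ j ∈ Finset.Icc (i : ℕ) (r - 1), (q : ℤ) ^ j →
      b ⟨r - 1, by omega⟩ = a ⟨r - 1, by omega⟩ + (q : ℤ) * ((∑ i : Fin (r + 1), a i) - τ) := by
  obtain ⟨k, rfl⟩ : ∃ k, r = k + 1 := ⟨r - 1, by omega⟩
  simp only [Nat.add_sub_cancel]
  have part1 := part1_lemma q k n τ a hn m hm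
  exact ⟨part1, fun b hb hmb => part2_lemma q hq k τ m a ha part1 b hb hmb⟩
end

section
/- For every prime power q and every r ∈ ℕ, the largest integer that is not the cardinality of any q^r-divisible multiset of points over F_q equals r·q^{r+1} − (q^{r+1}−1)/(q−1). In particular, for every integer n > r·q^{r+1} − (q^{r+1}−1)/(q−1) there exists a q^r-divisible multiset of points of cardinality n. -/
open scoped Classical

namespace FrobDiv

variable (q : ℤ)

/-- `S q r i = q^i + ... + q^r`. -/
def S (r i : ℕ) : ℤ := ∑ j ∈ Finset.Icc i r, q ^ j

/-- leading coefficient of the S-adic expansion -/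
def L : ℕ → ℤ → ℤ
  | 0, n => n
  | (r+1), n => L r ((n - (n % q) * S q (r+1) 0) / q)

lemma S_nonneg (hq : 2 ≤ q) (r i : ℕ) : 0 ≤ S q r i :=
  Finset.sum_nonneg fun j _ => pow_nonneg (by omega) _

lemma q_dvd_S (r : ℕ) {i : ℕ} (hi : 1 ≤ i) : q ∣ S q r i := by
  refine Finset.dvd_sum fun j hj => ?_
  have : 1 ≤ j := le_trans hi (Finset.mem_Icc.mp hj).1
  exact dvd_pow_self q (by omega)

lemma S_zero_eq (r : ℕ) : S q r 0 = 1 + S q r 1 := by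
  have h : Finset.Icc 0 r = insert 0 (Finset.Icc 1 r) := by
    ext j; simp [Finset.mem_Icc, Finset.mem_insert]; omega
  rw [S, h, Finset.sum_insert (by simp), pow_zero]; rfl

lemma q_dvd_sub_S_zero (r : ℕ) : q ∣ S q r 0 - 1 := by
  rw [S_zero_eq]; simpa using q_dvd_S q r (le_refl 1)

lemma q_mul_S (r i : ℕ) : q * S q r i = S q (r+1) (i+1) := by
  rw [S, S, Finset.mul_sum]
  rw [show Finset.Icc (i+1) (r+1) = (Finset.Icc i r).image (· + 1) by
    ext j
    simp only [Finset.mem_Icc, Finset.mem_image]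
    constructor
    · rintro ⟨h1, h2⟩; exact ⟨j - 1, by omega, by omega⟩
    · rintro ⟨a, ⟨h1, h2⟩, rfl⟩; omega]
  rw [Finset.sum_image (fun a _ b _ h => by omega)]
  exact Finset.sum_congr rfl fun j _ => by ring

lemma S_succ_eq (r i : ℕ) (h : i ≤ r + 1) : S q (r+1) i = S q r i + q ^ (r+1) := by
  rw [S, S, show Finset.Icc i (r+1) = insert (r+1) (Finset.Icc i r) by
    ext j; simp [Finset.mem_Icc, Finset.mem_insert]; omega]
  rw [Finset.sum_insert (by simp [Finset.mem_Icc])]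
  ring

lemma S_geom (r i : ℕ) (h : i ≤ r) : (q - 1) * S q r i = q ^ (r+1) - q ^ i := by
  induction r with
  | zero =>
    interval_cases i
    rw [S, Finset.Icc_self, Finset.sum_singleton]
    ring
  | succ r ih =>
    rcases Nat.lt_or_ge i (r+1) with hi | hi
    · rw [S_succ_eq q r i (by omega), mul_add, ih (by omega)]
      ring
    · have : i = r + 1 := by omega
      subst this
      rw [S, Finset.Icc_self, Finset.sum_singleton]
      ring

lemma L_rep (hq : 2 ≤ q) : ∀ (r : ℕ) (a : ℕ → ℤ) (t : ℤ),
    (∀ i < r, 0 ≤ a i ∧ a i < q) →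
    L q r (∑ i ∈ Finset.range r, a i * S q r i + t * q ^ r) = t := by
  intro r
  induction r with
  | zero => intro a t _; simp [L]
  | succ r ih =>
    intro a t ha
    set n := ∑ i ∈ Finset.range (r+1), a i * S q (r+1) i + t * q ^ (r+1) with hn
    have hq0 : q ≠ 0 := by omega
    have hsplit : n = a 0 * S q (r+1) 0 +
        (∑ i ∈ Finset.range r, a (i+1) * S q (r+1) (i+1) + t * q ^ (r+1)) := by
      rw [hn, Finset.sum_range_succ']; ring
    have hdvd : q ∣ ∑ i ∈ Finset.range r, a (i+1) * S q (r+1) (i+1) + t * q ^ (r+1) := by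
      refine dvd_add (Finset.dvd_sum fun i _ => Dvd.dvd.mul_left (q_dvd_S q (r+1) (by omega)) _) ?_
      exact Dvd.dvd.mul_left (dvd_pow_self q (by omega)) t
    obtain ⟨c, hc⟩ := hdvd
    have hmod : n % q = a 0 := by
      have h1 : n = a 0 + (a 0 * (S q (r+1) 0 - 1) + q * c) := by rw [hsplit, hc]; ring
      obtain ⟨d, hd⟩ := q_dvd_sub_S_zero q (r+1)
      have h2 : n = a 0 + q * (a 0 * d + c) := by rw [h1, hd]; ring
      rw [h2]
      rw [Int.add_mul_emod_self_left]
      exact Int.emod_eq_of_lt (ha 0 (by omega)).1 (ha 0 (by omega)).2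
    have hdiv : (n - n % q * S q (r+1) 0) / q
        = ∑ i ∈ Finset.range r, a (i+1) * S q r i + t * q ^ r := by
      rw [hmod]
      have : n - a 0 * S q (r+1) 0 = q * (∑ i ∈ Finset.range r, a (i+1) * S q r i + t * q ^ r) := by
        have hs : q * ∑ i ∈ Finset.range r, a (i+1) * S q r i
            = ∑ i ∈ Finset.range r, a (i+1) * S q (r+1) (i+1) := by
          rw [Finset.mul_sum]
          exact Finset.sum_congr rfl fun i _ => by rw [← q_mul_S]; ring
        rw [hsplit, mul_add, hs]
        ring
      rw [this, Int.mul_ediv_cancel_left _ hq0]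
    show L q r _ = t
    rw [hdiv]
    exact ih (fun i => a (i+1)) t (fun i hi => ha (i+1) (by omega))

lemma L_exp (hq : 2 ≤ q) : ∀ (r : ℕ) (n : ℤ), ∃ a : ℕ → ℤ,
    (∀ i < r, 0 ≤ a i ∧ a i < q) ∧
    n = ∑ i ∈ Finset.range r, a i * S q r i + L q r n * q ^ r := by
  intro r
  induction r with
  | zero => intro n; exact ⟨0, by simp, by simp [L]⟩
  | succ r ih =>
    intro n
    have hq0 : (0:ℤ) < q := by omega
    set a0 := n % q with ha0
    have hdvd : q ∣ n - a0 * S q (r+1) 0 := by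
      obtain ⟨d, hd⟩ := q_dvd_sub_S_zero q (r+1)
      have h1 : n - a0 * S q (r+1) 0 = (n - a0) - a0 * (q * d) := by rw [← hd]; ring
      rw [h1]
      refine dvd_sub ?_ ⟨a0 * d, by ring⟩
      exact Int.dvd_self_sub_of_emod_eq rfl
    obtain ⟨n', hqn'⟩ : ∃ n', n - a0 * S q (r+1) 0 = q * n' := hdvd
    have hLn : L q (r+1) n = L q r n' := by
      show L q r ((n - n % q * S q (r+1) 0) / q) = L q r n'
      rw [← ha0, hqn', Int.mul_ediv_cancel_left _ (by omega)]
    obtain ⟨a', ha', hexp⟩ := ih n'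
    refine ⟨fun i => if i = 0 then a0 else a' (i-1), fun i hi => ?_, ?_⟩
    · by_cases h : i = 0
      · simp only [h, if_pos rfl, ha0]
        exact ⟨Int.emod_nonneg n (by omega), Int.emod_lt_of_pos n hq0⟩
      · simp only [h, if_neg h]; exact ha' (i-1) (by omega)
    · rw [hLn, Finset.sum_range_succ']
      simp only [Nat.succ_ne_zero, if_false, if_pos rfl, Nat.add_sub_cancel]
      have hs : ∑ i ∈ Finset.range r, a' i * S q (r+1) (i+1)
          = q * ∑ i ∈ Finset.range r, a' i * S q r i := by
        rw [Finset.mul_sum]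
        exact Finset.sum_congr rfl fun i _ => by rw [← q_mul_S]; ring
      have hn2 : n = q * n' + a0 * S q (r+1) 0 := by omega
      calc n = q * n' + a0 * S q (r+1) 0 := hn2
        _ = q * (∑ i ∈ Finset.range r, a' i * S q r i + L q r n' * q ^ r)
              + a0 * S q (r+1) 0 := by rw [← hexp]
        _ = ∑ i ∈ Finset.range r, a' i * S q (r+1) (i+1) + a0 * S q (r+1) 0
              + L q r n' * q ^ (r+1) := by rw [hs]; ring

lemma N_rep (hq : 2 ≤ q) (r : ℕ) :
    ∑ i ∈ Finset.range r, (q-1) * S q r i + (-1) * q ^ r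
      = (r:ℤ) * q^(r+1) - S q r 0 := by
  have h1 : ∑ i ∈ Finset.range r, (q-1) * S q r i
      = (r:ℤ) * q^(r+1) - ∑ i ∈ Finset.range r, q^i := by
    rw [Finset.sum_congr rfl (fun i hi => S_geom q r i (by
      have := Finset.mem_range.mp hi; omega))]
    rw [Finset.sum_sub_distrib, Finset.sum_const, Finset.card_range]
    simp [nsmul_eq_mul]
  have h2 : S q r 0 = ∑ i ∈ Finset.range (r+1), q^i := by
    rw [S]
    apply Finset.sum_congr _ (fun _ _ => rfl)
    ext j; simp [Finset.mem_Icc, Finset.mem_range]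
  rw [h1, h2, Finset.sum_range_succ]; ring

lemma L_N (hq : 2 ≤ q) (r : ℕ) : L q r ((r:ℤ) * q^(r+1) - S q r 0) = -1 := by
  rw [← N_rep q hq r]
  exact L_rep q hq r _ (-1) (fun i hi => ⟨by omega, by omega⟩)

lemma exists_digits_of_gt (hq : 2 ≤ q) (r : ℕ) (n : ℤ)
    (hn : (r:ℤ) * q^(r+1) - S q r 0 < n) :
    ∃ a : ℕ → ℤ, (∀ i < r, 0 ≤ a i ∧ a i < q) ∧ 0 ≤ L q r n ∧
      n = ∑ i ∈ Finset.range r, a i * S q r i + L q r n * q ^ r := by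
  obtain ⟨a, ha, hexp⟩ := L_exp q hq r n
  refine ⟨a, ha, ?_, hexp⟩
  by_contra h
  push_neg at h
  have hL : L q r n ≤ -1 := by omega
  have hub : ∑ i ∈ Finset.range r, a i * S q r i ≤ ∑ i ∈ Finset.range r, (q-1) * S q r i := by
    refine Finset.sum_le_sum fun i hi => ?_
    have hai := ha i (Finset.mem_range.mp hi)
    exact mul_le_mul_of_nonneg_right (by omega) (S_nonneg q hq r i)
  have hLq : L q r n * q ^ r ≤ (-1) * q ^ r :=
    mul_le_mul_of_nonneg_right hL (pow_nonneg (by omega) r)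
  have hNr := N_rep q hq r
  linarith [hub, hLq, hNr, hn, hexp]

lemma key_ineq (hq : 2 ≤ q) (r : ℕ) (n m t : ℤ) (hm : 0 ≤ m) (hLm : 0 ≤ L q r m)
    (heq : n = m + t * q^(r+1)) (hLn : L q (r+1) n < 0) : n < q * m := by
  obtain ⟨b, hb, hmexp⟩ := L_exp q hq r m
  set B := L q r m with hBdef
  clear_value B
  set u := B % q with hudef
  set v := B / q with hvdef
  have hB : B = u + q * v := by
    rw [hudef, hvdef]; exact (Int.emod_add_mul_ediv B q).symm
  have hu0 : 0 ≤ u := Int.emod_nonneg B (by omega)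
  have hu1 : u < q := Int.emod_lt_of_pos B (by omega)
  have hv0 : 0 ≤ v := Int.ediv_nonneg hLm (by omega)
  clear_value u v
  set Sb := ∑ i ∈ Finset.range r, b i with hSb
  set G := ∑ i ∈ Finset.range r, b i * q ^ i with hG
  clear_value Sb G
  -- expansion of n at level r+1
  have hrep : n = ∑ i ∈ Finset.range (r+1), (fun i => if i < r then b i else u) i * S q (r+1) i
      + (t + v - Sb - u) * q ^ (r+1) := by
    rw [Finset.sum_range_succ]
    have har : (fun i => if i < r then b i else u) r * S q (r+1) r
        = u * (q ^ r + q ^ (r+1)) := by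
      rw [S_succ_eq q r r (by omega),
        show S q r r = q ^ r by rw [S, Finset.Icc_self, Finset.sum_singleton]]
      simp
    rw [har]
    have hcong : ∑ i ∈ Finset.range r, (fun i => if i < r then b i else u) i * S q (r+1) i
        = ∑ i ∈ Finset.range r, (b i * S q r i + b i * q^(r+1)) := by
      refine Finset.sum_congr rfl fun i hi => ?_
      have hir := Finset.mem_range.mp hi
      simp only [if_pos hir]
      rw [S_succ_eq q r i (by omega)]
      ring
    rw [hcong, Finset.sum_add_distrib, ← Finset.sum_mul, ← hSb]
    rw [heq, hmexp, hB]
    ring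
  have hLt : L q (r+1) n = t + v - Sb - u := by
    rw [hrep]
    refine L_rep q hq (r+1) _ _ fun i hi => ?_
    by_cases hir : i < r
    · simpa [hir] using hb i hir
    · simp only [if_neg hir]; exact ⟨hu0, hu1⟩
  have ht' : t ≤ -1 - v + Sb + u := by rw [hLt] at hLn; omega
  have e1 : n - q * m = t * q^(r+1) - (q-1) * m := by rw [heq]; ring
  have e2 : (q-1) * m = q^(r+1) * Sb - G + (q-1) * u * q^r + (q-1) * v * q^(r+1) := by
    rw [hmexp, mul_add, Finset.mul_sum]
    have hcong : ∑ i ∈ Finset.range r, (q-1) * (b i * S q r i)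
        = ∑ i ∈ Finset.range r, (b i * q^(r+1) - b i * q^i) := by
      refine Finset.sum_congr rfl fun i hi => ?_
      have hir := Finset.mem_range.mp hi
      rw [show (q-1) * (b i * S q r i) = b i * ((q-1) * S q r i) by ring,
        S_geom q r i (by omega)]
      ring
    rw [hcong, Finset.sum_sub_distrib, ← Finset.sum_mul, ← hSb, ← hG, hB]
    ring
  have e3 : t * q^(r+1) ≤ (-1 - v + Sb + u) * q^(r+1) :=
    mul_le_mul_of_nonneg_right ht' (pow_nonneg (by omega) _)
  have hGle : G ≤ q^r - 1 := by
    have h1 : G ≤ ∑ i ∈ Finset.range r, (q-1) * q^i := by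
      rw [hG]
      refine Finset.sum_le_sum fun i hi => ?_
      refine mul_le_mul_of_nonneg_right ?_ (pow_nonneg (by omega) _)
      have := (hb i (Finset.mem_range.mp hi)).2
      omega
    have h2 : ∑ i ∈ Finset.range r, (q-1) * q^i = q^r - 1 := by
      rw [← Finset.mul_sum, mul_comm, geom_sum_mul]
    linarith
  have a1 : u * q^(r+1) - (q-1) * u * q^r = u * q^r := by rw [pow_succ]; ring
  have a2 : v * q^(r+1) + (q-1)*v*q^(r+1) = q * (v * q^(r+1)) := by ring
  have a3 : (0:ℤ) ≤ q * (v * q^(r+1)) :=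
    mul_nonneg (by omega) (mul_nonneg hv0 (pow_nonneg (by omega) _))
  have a4 : u * q^r ≤ (q-1) * q^r :=
    mul_le_mul_of_nonneg_right (by omega) (pow_nonneg (by omega) _)
  have a5 : (q-1) * q^r + q^r = q^(r+1) := by rw [pow_succ]; ring
  have a6 : (0:ℤ) < q^(r+1) := pow_pos (by omega) _
  linarith [e1, e2, e3, hGle, a1, a2, a3, a4, a5, a6]

section Comb

open Module Submodule

lemma countP_swap {α β : Type*} (s : Finset α) (P : Multiset β) (p : α → β → Prop)
    [∀ a, DecidablePred (p a)] [DecidableEq α] :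
    ∑ a ∈ s, P.countP (p a) = (P.map (fun X => (s.filter (fun a => p a X)).card)).sum := by
  induction P using Multiset.induction with
  | empty => simp
  | cons X P ih =>
    simp only [Multiset.countP_cons, Multiset.map_cons, Multiset.sum_cons, Finset.sum_add_distrib, ih]
    rw [add_comm]
    congr 1
    rw [Finset.card_filter]

variable {F : Type} [Field F] [Fintype F] {V : Type} [AddCommGroup V] [Module F V]
  [FiniteDimensional F V]

lemma finite_submodule : Finite (Submodule F V) := by
  have : Finite V := Module.finite_of_finite F
  exact Finite.of_injective (fun W : Submodule F V => (W : Set V)) SetLike.coe_injective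

lemma dual_ann_finrank (W : Submodule F V) :
    finrank F ↥(Submodule.dualAnnihilator W) + finrank F ↥W = finrank F V := by
  rw [← LinearEquiv.finrank_eq (Subspace.quotEquivAnnihilator W)]
  exact Submodule.finrank_quotient_add_finrank W

lemma card_ann (X : Submodule F V) [Fintype V] [Fintype (Module.Dual F V)] :
    Fintype.card {φ : Module.Dual F V // X ≤ LinearMap.ker φ}
      = Fintype.card F ^ (finrank F V - finrank F ↥X) := by
  have hiff : ∀ φ : Module.Dual F V, X ≤ LinearMap.ker φ ↔ φ ∈ X.dualAnnihilator := by
    intro φ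
    rw [Submodule.mem_dualAnnihilator]
    constructor
    · intro h w hw; exact h hw
    · intro h w hw; exact LinearMap.mem_ker.mpr (h w hw)
  rw [Fintype.card_congr (Equiv.subtypeEquivRight hiff)]
  have h1 : Fintype.card ↥(X.dualAnnihilator) = Fintype.card F ^ finrank F ↥(X.dualAnnihilator) :=
    by rw [Module.card_eq_pow_finrank (K := F) (V := ↥(X.dualAnnihilator))]
  rw [h1]
  congr 1
  have := dual_ann_finrank X
  omega

lemma card_points (U : Submodule F V) [Fintype V] [Fintype (Submodule F V)] :
    (Fintype.card F - 1) *
      (Finset.univ.filter (fun X : Submodule F V => X ≤ U ∧ finrank F ↥X = 1)).card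
      = Fintype.card F ^ (finrank F ↥U) - 1 := by
  classical
  set T := Finset.univ.filter (fun X : Submodule F V => X ≤ U ∧ finrank F ↥X = 1) with hT
  set f : ↥U → Submodule F V := fun v => Submodule.span F {(v : V)} with hf
  set A : Finset ↥U := Finset.univ.erase 0 with hA
  have hAcard : A.card = Fintype.card F ^ (finrank F ↥U) - 1 := by
    rw [hA, Finset.card_erase_of_mem (Finset.mem_univ _), Finset.card_univ]
    congr 1
    exact card_eq_pow_finrank
  have hmaps : ∀ v ∈ A, f v ∈ T := by
    intro v hv
    have hv0 : v ≠ 0 := Finset.ne_of_mem_erase hv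
    have hv0' : (v : V) ≠ 0 := fun h => hv0 (Subtype.ext h)
    rw [hT, Finset.mem_filter]
    refine ⟨Finset.mem_univ _, ?_, finrank_span_singleton hv0'⟩
    rw [Submodule.span_le, Set.singleton_subset_iff]
    exact v.2
  have hsum := Finset.card_eq_sum_card_fiberwise hmaps
  have hfiber : ∀ X ∈ T, (A.filter (fun v => f v = X)).card
      = Fintype.card F - 1 := by
    intro X hX
    rw [hT, Finset.mem_filter] at hX
    obtain ⟨-, hXU, hX1⟩ := hX
    have hset : A.filter (fun v => f v = X)
        = Finset.univ.filter (fun v : ↥U => (v : V) ∈ X ∧ v ≠ 0) := by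
      ext v
      simp only [hA, Finset.mem_filter, Finset.mem_erase, Finset.mem_univ, true_and, and_true]
      constructor
      · rintro ⟨hv0, hspan⟩
        exact ⟨hspan ▸ Submodule.mem_span_singleton_self _, hv0⟩
      · rintro ⟨hvX, hv0⟩
        refine ⟨hv0, ?_⟩
        have hv0' : (v : V) ≠ 0 := fun h => hv0 (Subtype.ext h)
        refine Submodule.eq_of_le_of_finrank_le ?_ ?_
        · rw [Submodule.span_le, Set.singleton_subset_iff]; exact hvX
        · rw [hX1, finrank_span_singleton hv0']
    rw [hset, ← Fintype.card_subtype]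
    have e : {v : ↥U // (v : V) ∈ X ∧ v ≠ 0} ≃ {w : ↥X // w ≠ 0} := {
      toFun := fun v => ⟨⟨(v.1 : V), v.2.1⟩, by
        intro h
        apply v.2.2
        have h2 : ((v.1 : V)) = 0 := by simpa using congrArg Subtype.val h
        exact Subtype.ext h2⟩
      invFun := fun w => ⟨⟨(w.1 : V), hXU w.1.2⟩, ⟨w.1.2, by
        intro h
        apply w.2
        have h2 : ((w.1 : V)) = 0 := by simpa using congrArg Subtype.val h
        exact Subtype.ext h2⟩⟩
      left_inv := fun v => by ext; rfl
      right_inv := fun w => by ext; rfl }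
    rw [Fintype.card_congr e]
    have h1 : Fintype.card ↥X = Fintype.card F := by
      rw [card_eq_pow_finrank (K := F) (V := ↥X), hX1, pow_one]
    have h3 : Fintype.card {w : ↥X // w ≠ 0}
        = Fintype.card ↥X - Fintype.card {w : ↥X // w = 0} :=
      Fintype.card_subtype_compl _
    rw [h3, h1, Fintype.card_subtype_eq (0 : ↥X)]
  rw [hsum, Finset.sum_congr rfl hfiber, Finset.sum_const, smul_eq_mul] at hAcard
  rw [mul_comm]
  exact hAcard

lemma sum_map_const {β : Type*} (s : Multiset β) (c : ℕ) :
    (s.map (fun _ => c)).sum = Multiset.card s * c := by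
  induction s using Multiset.induction with
  | empty => simp
  | cons X s ih => simp [ih, add_mul]; ring

lemma ker_coe_hyperplane {A2 : Submodule F (Module.Dual F V)} (φ : ↥A2) (hφ : φ ≠ 0) :
    finrank F ↥(LinearMap.ker (φ : Module.Dual F V)) + 1 = finrank F V := by
  have hv : (φ : Module.Dual F V) ≠ 0 := fun h => hφ (Subtype.ext h)
  exact Module.Dual.finrank_ker_add_one_of_ne_zero hv

lemma pencil_cong (r : ℕ) (P : Multiset (Submodule F V)) (hP1 : ∀ X ∈ P, finrank F ↥X = 1)
    (W : Submodule F V) (hW : finrank F ↥W + 2 = finrank F V)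
    (hdiv : ∀ H : Submodule F V, finrank F ↥H + 1 = finrank F V →
      ((Fintype.card F : ℤ))^(r+1) ∣ (Multiset.countP (fun X => X ≤ H) P : ℤ) - Multiset.card P) :
    ((Fintype.card F : ℤ))^r ∣ (Multiset.countP (fun X => X ≤ W) P : ℤ) - Multiset.card P := by
  classical
  set q : ℕ := Fintype.card F with hqdef
  have hq : 2 ≤ q := Fintype.one_lt_card
  haveI : Finite V := Module.finite_of_finite F
  haveI : Fintype V := Fintype.ofFinite V
  haveI : Finite (Module.Dual F V) := Module.finite_of_finite F
  haveI : Fintype (Module.Dual F V) := Fintype.ofFinite _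
  set A2 := W.dualAnnihilator with hA2
  have hA2rank : finrank F ↥A2 = 2 := by
    rw [hA2]
    have := dual_ann_finrank W
    omega
  have hA2card : Fintype.card ↥A2 = q^2 := by
    rw [card_eq_pow_finrank (K := F) (V := ↥A2), hA2rank]
  -- counting fibers
  have hcnt : ∀ X ∈ P, (Finset.univ.filter
      (fun φ : ↥A2 => X ≤ LinearMap.ker (φ : Module.Dual F V))).card
      = if X ≤ W then q^2 else q := by
    intro X hX
    have hX1 := hP1 X hX
    have hcard : (Finset.univ.filter
        (fun φ : ↥A2 => X ≤ LinearMap.ker (φ : Module.Dual F V))).card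
        = Fintype.card ↥(A2 ⊓ X.dualAnnihilator) := by
      rw [← Fintype.card_subtype]
      refine Fintype.card_congr ({
        toFun := fun φ => ⟨φ.1.1, Submodule.mem_inf.mpr ⟨φ.1.2, by
          rw [Submodule.mem_dualAnnihilator]
          intro w hw
          exact φ.2 hw⟩⟩
        invFun := fun ψ => ⟨⟨ψ.1, (Submodule.mem_inf.mp ψ.2).1⟩, by
          intro w hw
          have := (Submodule.mem_inf.mp ψ.2).2
          rw [Submodule.mem_dualAnnihilator] at this
          exact LinearMap.mem_ker.mpr (this w hw)⟩
        left_inv := fun φ => by ext; rfl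
        right_inv := fun ψ => by ext; rfl })
    rw [hcard]
    by_cases hXW : X ≤ W
    · rw [if_pos hXW]
      have hle : A2 ≤ X.dualAnnihilator := by
        intro φ hφ
        rw [Submodule.mem_dualAnnihilator]
        intro w hw
        rw [hA2, Submodule.mem_dualAnnihilator] at hφ
        exact hφ w (hXW hw)
      rw [inf_eq_left.mpr hle]
      exact hA2card
    · rw [if_neg hXW]
      have hsup : A2 ⊓ X.dualAnnihilator = (W ⊔ X).dualAnnihilator := by
        rw [hA2, Submodule.dualAnnihilator_sup_eq]
      have hinf : W ⊓ X = ⊥ := by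
        by_contra hne
        have h1 : finrank F ↥(W ⊓ X) = 1 := by
          have hle : finrank F ↥(W ⊓ X) ≤ finrank F ↥X :=
            Submodule.finrank_mono inf_le_right
          have h0 : finrank F ↥(W ⊓ X) ≠ 0 := by
            intro h
            exact hne ((Submodule.finrank_eq_zero).mp h)
          omega
        have : W ⊓ X = X := Submodule.eq_of_le_of_finrank_le inf_le_right (by omega)
        exact hXW (this ▸ inf_le_left)
      have hfr : finrank F ↥(W ⊔ X) + 1 = finrank F V := by
        have h2 := Submodule.finrank_sup_add_finrank_inf_eq W X
        rw [hinf] at h2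
        simp only [finrank_bot] at h2
        omega
      rw [hsup, card_eq_pow_finrank (K := F) (V := ↥((W ⊔ X).dualAnnihilator))]
      have h3 := dual_ann_finrank (W ⊔ X)
      have : finrank F ↥((W ⊔ X).dualAnnihilator) = 1 := by omega
      rw [this, pow_one]
  -- the double counting identity
  have hswap := countP_swap (Finset.univ : Finset ↥A2) P
    (fun φ X => X ≤ LinearMap.ker (φ : Module.Dual F V))
  -- RHS
  set n := Multiset.card P with hn
  set n1 := Multiset.countP (fun X => X ≤ W) P with hn1
  have hrhs : (P.map (fun X => (Finset.univ.filter
      (fun φ : ↥A2 => X ≤ LinearMap.ker (φ : Module.Dual F V))).card)).sum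
      = q^2 * n1 + q * (n - n1) := by
    have hsplit := Multiset.filter_add_not (fun X => X ≤ W) P
    conv_lhs => rw [← hsplit]
    rw [Multiset.map_add, Multiset.sum_add]
    have hmap1 : (P.filter (fun X => X ≤ W)).map (fun X => (Finset.univ.filter
        (fun φ : ↥A2 => X ≤ LinearMap.ker (φ : Module.Dual F V))).card)
        = (P.filter (fun X => X ≤ W)).map (fun _ => q^2) := by
      refine Multiset.map_congr rfl fun X hX => ?_
      have hmem := Multiset.mem_filter.mp hX
      rw [hcnt X hmem.1, if_pos hmem.2]
    have hmap2 : (P.filter (fun X => ¬ X ≤ W)).map (fun X => (Finset.univ.filter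
        (fun φ : ↥A2 => X ≤ LinearMap.ker (φ : Module.Dual F V))).card)
        = (P.filter (fun X => ¬ X ≤ W)).map (fun _ => q) := by
      refine Multiset.map_congr rfl fun X hX => ?_
      have hmem := Multiset.mem_filter.mp hX
      rw [hcnt X hmem.1, if_neg hmem.2]
    rw [hmap1, hmap2, sum_map_const, sum_map_const]
    have hc1 : Multiset.card (P.filter (fun X => X ≤ W)) = n1 := by
      rw [hn1, Multiset.countP_eq_card_filter]
    have hc2 : Multiset.card (P.filter (fun X => ¬ X ≤ W)) = n - n1 := by
      have := congrArg Multiset.card hsplit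
      rw [Multiset.card_add] at this
      omega
    rw [hc1, hc2]
    ring
  -- LHS: single zero term
  have hzero : Multiset.countP
      (fun X => X ≤ LinearMap.ker ((0 : ↥A2) : Module.Dual F V)) P = n := by
    rw [hn]
    refine Multiset.countP_eq_card.mpr fun X _ => ?_
    show X ≤ LinearMap.ker (0 : Module.Dual F V)
    rw [LinearMap.ker_zero]
    exact le_top
  have hn1len : n1 ≤ n := by
    rw [hn1, hn]; exact Multiset.countP_le_card _ _
  have key : ((q:ℤ))^(r+1) ∣ (q:ℤ)*((q:ℤ)-1)*((n1:ℤ) - (n:ℤ)) := by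
    have h1 : ∑ φ ∈ (Finset.univ : Finset ↥A2),
        ((Multiset.countP (fun X => X ≤ LinearMap.ker (φ : Module.Dual F V)) P : ℤ) - (n:ℤ))
        = (q:ℤ)*((q:ℤ)-1)*((n1:ℤ) - (n:ℤ)) := by
      rw [Finset.sum_sub_distrib, Finset.sum_const, Finset.card_univ, hA2card]
      have h2 : ∑ φ ∈ (Finset.univ : Finset ↥A2),
          ((Multiset.countP (fun X => X ≤ LinearMap.ker (φ : Module.Dual F V)) P : ℤ))
          = ((q^2*n1 + q*(n-n1) : ℕ) : ℤ) := by
        rw [← Nat.cast_sum]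
        exact congrArg _ (hswap.trans hrhs)
      rw [h2]
      push_cast [Nat.cast_sub hn1len]
      ring
    rw [← h1]
    refine Finset.dvd_sum fun φ _ => ?_
    by_cases h0 : φ = 0
    · subst h0
      rw [hzero]
      simp
    · exact hdiv _ (ker_coe_hyperplane φ h0)
  have hqne : ((q:ℤ)) ≠ 0 := by
    have : (2:ℤ) ≤ (q:ℤ) := by exact_mod_cast hq
    omega
  have hdvd2 : ((q:ℤ))^r ∣ ((q:ℤ)-1)*((n1:ℤ) - (n:ℤ)) := by
    have h3 : ((q:ℤ))^r * (q:ℤ) ∣ (((q:ℤ)-1)*((n1:ℤ) - (n:ℤ))) * (q:ℤ) := by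
      rw [← pow_succ]
      have : (((q:ℤ)-1)*((n1:ℤ) - (n:ℤ))) * (q:ℤ)
          = (q:ℤ)*((q:ℤ)-1)*((n1:ℤ) - (n:ℤ)) := by ring
      rw [this]
      exact key
    exact (mul_dvd_mul_iff_right hqne).mp h3
  have hcop : IsCoprime (((q:ℤ))^r) ((q:ℤ)-1) :=
    IsCoprime.pow_left ⟨1, -1, by ring⟩
  exact hcop.dvd_of_dvd_mul_left hdvd2

lemma restrict_divisible (r : ℕ) (H : Submodule F V) (hH : finrank F ↥H + 1 = finrank F V)
    (P : Multiset (Submodule F V)) (hdiv : IsDivisible F (r+1) P) :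
    IsDivisible F r ((P.filter (fun X => X ≤ H)).map (Submodule.comap H.subtype)) ∧
    Multiset.card ((P.filter (fun X => X ≤ H)).map (Submodule.comap H.subtype))
      = Multiset.countP (fun X => X ≤ H) P := by
  classical
  obtain ⟨hP1, hPdiv⟩ := hdiv
  set q : ℕ := Fintype.card F with hqdef
  have hq : 2 ≤ q := Fintype.one_lt_card
  have hcard : Multiset.card ((P.filter (fun X => X ≤ H)).map (Submodule.comap H.subtype))
      = Multiset.countP (fun X => X ≤ H) P := by
    rw [Multiset.card_map, Multiset.countP_eq_card_filter]
  refine ⟨⟨?_, ?_⟩, hcard⟩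
  · intro Y hY
    obtain ⟨X, hX, rfl⟩ := Multiset.mem_map.mp hY
    have hXP := Multiset.mem_filter.mp hX
    rw [LinearEquiv.finrank_eq (Submodule.comapSubtypeEquivOfLe hXP.2)]
    exact hP1 X hXP.1
  · intro H' hH'
    -- W is the corresponding codimension-2 subspace of V
    set W : Submodule F V := H'.map H.subtype with hWdef
    have hWfr : finrank F ↥W = finrank F ↥H' := (Submodule.finrank_map_subtype_eq H H').symm ▸ rfl
    have hW2 : finrank F ↥W + 2 = finrank F V := by
      rw [hWdef, Submodule.finrank_map_subtype_eq]
      omega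
    have hdivZ : ∀ K : Submodule F V, finrank F ↥K + 1 = finrank F V →
        ((q : ℤ))^(r+1) ∣ (Multiset.countP (fun X => X ≤ K) P : ℤ) - Multiset.card P := by
      intro K hK
      have h := hPdiv K hK
      have h2 := (Nat.modEq_iff_dvd (n := q^(r+1))).mp h
      rw [Multiset.countP_eq_card_filter]
      push_cast at h2
      exact dvd_sub_comm.mp h2
    have hpencil := pencil_cong r P hP1 W hW2 hdivZ
    have hHdvd : ((q : ℤ))^r ∣ (Multiset.countP (fun X => X ≤ H) P : ℤ) - Multiset.card P := by
      exact dvd_trans (pow_dvd_pow _ (by omega)) (hdivZ H hH)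
    -- identify the filtered multiset
    have hfilt : ((P.filter (fun X => X ≤ H)).map (Submodule.comap H.subtype)).filter
        (fun Y => Y ≤ H') = (P.filter (fun X => X ≤ W)).map (Submodule.comap H.subtype) := by
      rw [Multiset.filter_map]
      congr 1
      rw [Multiset.filter_filter]
      refine Multiset.filter_congr fun X hX => ?_
      constructor
      · rintro ⟨hcom, hXH⟩
        have h1 : Submodule.map H.subtype (Submodule.comap H.subtype X) = X := by
          rw [Submodule.map_comap_subtype]
          exact inf_eq_right.mpr hXH
        calc X = Submodule.map H.subtype (Submodule.comap H.subtype X) := h1.symm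
          _ ≤ Submodule.map H.subtype H' := Submodule.map_mono hcom
      · intro hXW
        have hWH : W ≤ H := Submodule.map_subtype_le H H'
        refine ⟨?_, le_trans hXW hWH⟩
        have : Submodule.comap H.subtype W = H' :=
          Submodule.comap_map_eq_of_injective (Submodule.injective_subtype H) H'
        calc Submodule.comap H.subtype X ≤ Submodule.comap H.subtype W :=
              Submodule.comap_mono hXW
          _ = H' := this
    rw [hfilt, hcard]
    rw [Multiset.card_map]
    have hWcnt : Multiset.card (P.filter (fun X => X ≤ W))
        = Multiset.countP (fun X => X ≤ W) P := (Multiset.countP_eq_card_filter _ _).symm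
    rw [hWcnt]
    rw [Nat.modEq_iff_dvd]
    have hWH' : ((q:ℤ))^r ∣ (Multiset.countP (fun X => X ≤ W) P : ℤ)
        - (Multiset.countP (fun X => X ≤ H) P : ℤ) := by
      have := dvd_sub hpencil hHdvd
      simpa using this
    have h4 := dvd_sub_comm.mp hWH'
    push_cast
    exact h4

theorem key_nonneg (r : ℕ) : ∀ (V : Type) [AddCommGroup V] [Module F V]
    [FiniteDimensional F V] (P : Multiset (Submodule F V)),
    IsDivisible F r P → 0 ≤ L (Fintype.card F : ℤ) r (Multiset.card P) := by
  induction r with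
  | zero =>
    intro V _ _ _ P _
    exact Int.natCast_nonneg _
  | succ r ih =>
    intro V _ _ _ P hdiv
    classical
    set q : ℕ := Fintype.card F with hqdef
    have hq : 2 ≤ q := Fintype.one_lt_card
    have hqZ : (2:ℤ) ≤ (q:ℤ) := by exact_mod_cast hq
    by_contra hneg
    push_neg at hneg
    set n := Multiset.card P with hn
    by_cases hP0 : P = 0
    · have hn0 : n = 0 := by rw [hn, hP0]; simp
      have hL0 : L (q:ℤ) (r+1) ((n : ℕ) : ℤ) = 0 := by
        rw [hn0]
        have := L_rep (q:ℤ) hqZ (r+1) (fun _ => 0) 0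
          (fun i _ => ⟨le_refl 0, by show (0:ℤ) < (q:ℤ); omega⟩)
        simpa using this
      rw [hL0] at hneg
      omega
    -- dimension at least 1
    obtain ⟨X0, hX0⟩ := Multiset.exists_mem_of_ne_zero hP0
    have hd1 : 1 ≤ finrank F V := by
      have h1 := hdiv.1 X0 hX0
      have h2 : finrank F ↥X0 ≤ finrank F V := X0.finrank_le
      omega
    set d := finrank F V with hd
    haveI : Finite V := Module.finite_of_finite F
    haveI : Fintype V := Fintype.ofFinite V
    haveI : Finite (Module.Dual F V) := Module.finite_of_finite F
    haveI : Fintype (Module.Dual F V) := Fintype.ofFinite _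
    -- each nonzero functional gives a large hyperplane count
    have hkey : ∀ φ : Module.Dual F V, φ ≠ 0 →
        (n : ℤ) < (q:ℤ) * (Multiset.countP (fun X => X ≤ LinearMap.ker φ) P : ℤ) := by
      intro φ hφ
      have hHyp : finrank F ↥(LinearMap.ker φ) + 1 = finrank F V :=
        Module.Dual.finrank_ker_add_one_of_ne_zero hφ
      obtain ⟨hdiv', hcard'⟩ := restrict_divisible r (LinearMap.ker φ) hHyp P hdiv
      have hih := ih ↥(LinearMap.ker φ) _ hdiv'
      rw [hcard'] at hih
      set m := Multiset.countP (fun X => X ≤ LinearMap.ker φ) P with hm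
      have hcong := hdiv.2 (LinearMap.ker φ) hHyp
      have hdvd := (Nat.modEq_iff_dvd (n := q^(r+1))).mp hcong
      rw [← Multiset.countP_eq_card_filter] at hdvd
      push_cast at hdvd
      obtain ⟨t, ht⟩ := hdvd
      have heq : (n:ℤ) = (m:ℤ) + t * (q:ℤ)^(r+1) := by linarith [ht]
      exact key_ineq (q:ℤ) hqZ r n m t (Int.natCast_nonneg m) hih heq hneg
    -- double counting over all functionals
    have hswap := countP_swap (Finset.univ : Finset (Module.Dual F V)) P
      (fun φ X => X ≤ LinearMap.ker φ)
    have hrhs : (P.map (fun X => (Finset.univ.filter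
        (fun φ : Module.Dual F V => X ≤ LinearMap.ker φ)).card)).sum = n * q^(d-1) := by
      have hmapc : ∀ X ∈ P, (Finset.univ.filter
          (fun φ : Module.Dual F V => X ≤ LinearMap.ker φ)).card = q^(d-1) := by
        intro X hX
        rw [← Fintype.card_subtype, card_ann X, hdiv.1 X hX]
      rw [Multiset.map_congr rfl hmapc, sum_map_const, ← hn]
    have hzero : Multiset.countP (fun X => X ≤ LinearMap.ker (0 : Module.Dual F V)) P = n := by
      rw [hn]
      refine Multiset.countP_eq_card.mpr fun X _ => ?_
      show X ≤ LinearMap.ker (0 : Module.Dual F V)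
      rw [LinearMap.ker_zero]
      exact le_top
    have h5 : ∑ φ ∈ (Finset.univ : Finset (Module.Dual F V)),
        Multiset.countP (fun X => X ≤ LinearMap.ker φ) P = n * q^(d-1) := hswap.trans hrhs
    have h6 : Multiset.countP (fun X => X ≤ LinearMap.ker (0 : Module.Dual F V)) P
        + ∑ φ ∈ (Finset.univ : Finset (Module.Dual F V)).erase 0,
          Multiset.countP (fun X => X ≤ LinearMap.ker φ) P
        = ∑ φ ∈ (Finset.univ : Finset (Module.Dual F V)),
          Multiset.countP (fun X => X ≤ LinearMap.ker φ) P :=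
      Finset.add_sum_erase (Finset.univ : Finset (Module.Dual F V))
        (fun φ => Multiset.countP (fun X => X ≤ LinearMap.ker φ) P)
        (Finset.mem_univ (0 : Module.Dual F V))
    rw [hzero, h5] at h6
    -- the erased sum, over ℤ
    set EZ := ∑ φ ∈ (Finset.univ : Finset (Module.Dual F V)).erase 0,
      (Multiset.countP (fun X => X ≤ LinearMap.ker φ) P : ℤ) with hEZ
    have hEeq : (n:ℤ) + EZ = n * (q:ℤ)^(d-1) := by
      have := congrArg (fun x : ℕ => (x:ℤ)) h6
      push_cast at this
      rw [hEZ]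
      push_cast
      linarith [this]
    have hcardD : Fintype.card (Module.Dual F V) = q^d := by
      rw [card_eq_pow_finrank (K := F) (V := Module.Dual F V), Subspace.dual_finrank_eq]
    have hce : ((Finset.univ : Finset (Module.Dual F V)).erase 0).card = q^d - 1 := by
      rw [Finset.card_erase_of_mem (Finset.mem_univ _), Finset.card_univ, hcardD]
    have hstep : ∀ φ ∈ (Finset.univ : Finset (Module.Dual F V)).erase 0,
        (n:ℤ) + 1 ≤ (q:ℤ) * (Multiset.countP (fun X => X ≤ LinearMap.ker φ) P : ℤ) := by
      intro φ hφ
      exact Int.add_one_le_iff.mpr (hkey φ (Finset.ne_of_mem_erase hφ))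
    have hsum_ineq := Finset.card_nsmul_le_sum _ _ _ hstep
    rw [hce] at hsum_ineq
    have hmulsum : ∑ φ ∈ (Finset.univ : Finset (Module.Dual F V)).erase 0,
        (q:ℤ) * (Multiset.countP (fun X => X ≤ LinearMap.ker φ) P : ℤ) = (q:ℤ) * EZ := by
      rw [hEZ, Finset.mul_sum]
    rw [hmulsum] at hsum_ineq
    -- numeric contradiction
    have hq0 : (0:ℤ) < (q:ℤ)^(d-1) := pow_pos (by omega) _
    have hqd1 : (1:ℤ) ≤ (q:ℤ)^(d-1) := hq0
    have hpow : ((q:ℤ))^d = (q:ℤ) * (q:ℤ)^(d-1) := by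
      rw [← pow_succ']
      congr 1
      omega
    rw [nsmul_eq_mul] at hsum_ineq
    have hcast : ((q^d - 1 : ℕ) : ℤ) = (q:ℤ)^d - 1 := by
      have h1 : 1 ≤ q^d := Nat.one_le_pow _ _ (by omega)
      push_cast [Nat.cast_sub h1]
      ring
    rw [hcast] at hsum_ineq
    have h7 : (q:ℤ) * EZ = (q:ℤ) * ((n:ℤ) * (q:ℤ)^(d-1) - (n:ℤ)) := by
      have : EZ = (n:ℤ) * (q:ℤ)^(d-1) - (n:ℤ) := by linarith [hEeq]
      rw [this]
    have hexpand : (q:ℤ) * ((n:ℤ) * (q:ℤ)^(d-1) - (n:ℤ)) - ((q:ℤ)^d - 1) * ((n:ℤ) + 1)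
        = -(q:ℤ)*(n:ℤ) + (n:ℤ) + 1 - (q:ℤ)^d := by
      rw [hpow]
      ring
    have hA : (q:ℤ) ≤ (q:ℤ)^d := by
      have := mul_le_mul_of_nonneg_left hqd1 (show (0:ℤ) ≤ (q:ℤ) by omega)
      rw [mul_one] at this
      linarith [hpow ▸ this]
    have hNq : (0:ℤ) ≤ (n:ℤ) * ((q:ℤ) - 1) :=
      mul_nonneg (Int.natCast_nonneg n) (by omega)
    have hexp2 : (n:ℤ) * ((q:ℤ) - 1) = (q:ℤ)*(n:ℤ) - (n:ℤ) := by ring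
    linarith [hsum_ineq, h7, hexpand, hA, hNq, hexp2]

lemma divisible_zero (r : ℕ) : IsDivisible F r (0 : Multiset (Submodule F V)) := by
  constructor
  · intro X hX; simp at hX
  · intro H _
    simp [Nat.ModEq.refl]

lemma divisible_add (r : ℕ) {P Q : Multiset (Submodule F V)}
    (hP : IsDivisible F r P) (hQ : IsDivisible F r Q) : IsDivisible F r (P + Q) := by
  constructor
  · intro X hX
    rcases Multiset.mem_add.mp hX with h | h
    · exact hP.1 X h
    · exact hQ.1 X h
  · intro H hH
    rw [Multiset.filter_add, Multiset.card_add, Multiset.card_add]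
    exact Nat.ModEq.add (hP.2 H hH) (hQ.2 H hH)

lemma divisible_nsmul (r : ℕ) (c : ℕ) {P : Multiset (Submodule F V)}
    (hP : IsDivisible F r P) : IsDivisible F r (c • P) := by
  induction c with
  | zero => rw [zero_nsmul]; exact divisible_zero r
  | succ c ih =>
    rw [succ_nsmul]
    exact divisible_add r ih hP

lemma divisible_finsum {ι : Type} (s : Finset ι) (f : ι → Multiset (Submodule F V)) (r : ℕ)
    (h : ∀ i ∈ s, IsDivisible F r (f i)) :
    IsDivisible F r (∑ i ∈ s, f i) ∧
      Multiset.card (∑ i ∈ s, f i) = ∑ i ∈ s, Multiset.card (f i) := by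
  classical
  induction s using Finset.induction with
  | empty => simpa using divisible_zero r
  | insert j s hni ih =>
    rw [Finset.sum_insert hni, Finset.sum_insert hni]
    obtain ⟨ih1, ih2⟩ := ih (fun i hi => h i (Finset.mem_insert_of_mem hi))
    exact ⟨divisible_add r (h j (Finset.mem_insert_self j s)) ih1,
      by rw [Multiset.card_add, ih2]⟩

lemma filter_nsmul {β : Type*} (p : β → Prop) [DecidablePred p] (c : ℕ) (s : Multiset β) :
    (c • s).filter p = c • (s.filter p) := by
  induction c with
  | zero => simp
  | succ c ih => rw [succ_nsmul, succ_nsmul, Multiset.filter_add, ih]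

lemma block_exists (r i : ℕ) (hi : i ≤ r) (U : Submodule F V)
    (hU : finrank F ↥U = r + 1 - i) :
    ∃ B : Multiset (Submodule F V), IsDivisible F r B ∧
      ((Fintype.card F : ℤ) - 1) * (Multiset.card B : ℤ)
        = (Fintype.card F : ℤ)^(r+1) - (Fintype.card F : ℤ)^i := by
  classical
  set q : ℕ := Fintype.card F with hqdef
  have hq : 2 ≤ q := Fintype.one_lt_card
  haveI : Finite V := Module.finite_of_finite F
  haveI : Fintype V := Fintype.ofFinite V
  haveI : Finite (Submodule F V) := finite_submodule
  haveI : Fintype (Submodule F V) := Fintype.ofFinite _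
  set T := Finset.univ.filter (fun X : Submodule F V => X ≤ U ∧ finrank F ↥X = 1) with hT
  have hTcard : (q - 1) * T.card = q ^ (r + 1 - i) - 1 := by
    rw [hT, ← hU]
    exact card_points U
  refine ⟨(q^i) • T.val, ⟨?_, ?_⟩, ?_⟩
  · intro X hX
    have hXT := Multiset.mem_of_mem_nsmul hX
    have := Finset.mem_filter.mp hXT
    exact this.2.2
  · -- hyperplane condition
    intro H hH
    rw [filter_nsmul, Multiset.card_nsmul, Multiset.card_nsmul]
    have hfv : T.val.filter (fun X => X ≤ H) = (T.filter (fun X => X ≤ H)).val := rfl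
    rw [hfv]
    show q ^ i * (T.filter (fun X => X ≤ H)).card ≡ q ^ i * T.card [MOD q ^ r]
    by_cases hUH : U ≤ H
    · have heq : T.filter (fun X => X ≤ H) = T := by
        refine Finset.filter_true_of_mem fun X hX => ?_
        exact le_trans (Finset.mem_filter.mp hX).2.1 hUH
      rw [heq]
    · -- U ⊓ H has corank 1 in U
      have hUHlt : H < U ⊔ H := by
        refine lt_of_le_of_ne le_sup_right ?_
        intro hEq
        exact hUH (hEq ▸ le_sup_left)
      have hsupfr : finrank F ↥(U ⊔ H) = finrank F V := by
        have h1 := Submodule.finrank_lt_finrank_of_lt hUHlt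
        have h2 := (U ⊔ H).finrank_le
        omega
      have hinf : finrank F ↥(U ⊓ H) = r - i := by
        have h3 := Submodule.finrank_sup_add_finrank_inf_eq U H
        rw [hsupfr, hU] at h3
        omega
      set T2 := Finset.univ.filter (fun X : Submodule F V => X ≤ U ⊓ H ∧ finrank F ↥X = 1)
        with hT2
      have hfilter_eq : T.filter (fun X => X ≤ H) = T2 := by
        rw [hT2]
        ext X
        rw [Finset.mem_filter, hT, Finset.mem_filter, Finset.mem_filter]
        constructor
        · rintro ⟨⟨_, hXU, hX1⟩, hXH⟩
          exact ⟨Finset.mem_univ _, le_inf hXU hXH, hX1⟩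
        · rintro ⟨_, hXUH, hX1⟩
          exact ⟨⟨Finset.mem_univ _, le_trans hXUH inf_le_left, hX1⟩,
            le_trans hXUH inf_le_right⟩
      have hT2card : (q - 1) * T2.card = q ^ (r - i) - 1 := by
        rw [hT2, ← hinf]
        exact card_points (U ⊓ H)
      have hTT2 : T.card = T2.card + q^(r-i) := by
        have h4 : (q - 1) * T.card = (q - 1) * (T2.card + q^(r-i)) := by
          rw [hTcard, Nat.mul_add, hT2card]
          have e1 : r + 1 - i = (r - i) + 1 := by omega
          rw [e1, pow_succ]
          have h5 : 1 ≤ q ^ (r - i) := Nat.one_le_pow _ _ (by omega)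
          have h6 : (q - 1) * q^(r-i) = q * q^(r-i) - 1 * q^(r-i) := Nat.sub_mul q 1 _
          have h7 : q^(r-i) * q = q * q^(r-i) := mul_comm _ _
          have h8 : q^(r-i) ≤ q * q^(r-i) := Nat.le_mul_of_pos_left _ (by omega)
          omega
        exact Nat.eq_of_mul_eq_mul_left (by omega) h4
      rw [hfilter_eq, hTT2]
      have e2 : q ^ i * (T2.card + q^(r-i)) = q^i * T2.card + q^r := by
        rw [Nat.mul_add, ← pow_add]
        congr 2
        omega
      rw [e2]
      exact (Nat.add_mod_right _ _).symm
  · -- cardinality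
    rw [Multiset.card_nsmul]
    have h1 : 1 ≤ q ^ (r + 1 - i) := Nat.one_le_pow _ _ (by omega)
    have hcast : ((q:ℤ) - 1) * (T.card : ℤ) = (q:ℤ)^(r+1-i) - 1 := by
      have := congrArg (fun x : ℕ => (x:ℤ)) hTcard
      push_cast [Nat.cast_sub (by omega : 1 ≤ q), Nat.cast_sub h1] at this
      linarith [this]
    push_cast
    calc ((q:ℤ) - 1) * ((q:ℤ)^i * (T.card:ℤ))
        = (q:ℤ)^i * (((q:ℤ) - 1) * (T.card:ℤ)) := by ring
      _ = (q:ℤ)^i * ((q:ℤ)^(r+1-i) - 1) := by rw [hcast]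
      _ = (q:ℤ)^(r+1) - (q:ℤ)^i := by
          rw [mul_sub, mul_one, ← pow_add]
          congr 2
          omega

lemma exists_submodule_rank (m k : ℕ) (hk : k ≤ m) :
    ∃ U : Submodule F (Fin m → F), finrank F ↥U = k := by
  classical
  let b := Pi.basisFun F (Fin m)
  refine ⟨Submodule.span F (Set.range (fun j : Fin k => b (Fin.castLE hk j))), ?_⟩
  have hli : LinearIndependent F (fun j : Fin k => b (Fin.castLE hk j)) :=
    b.linearIndependent.comp _ (Fin.castLE_injective hk)
  rw [finrank_span_eq_card hli]
  simp

end Comb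

end FrobDiv


/-- The largest integer that is not the cardinality of any `q^r`-divisible multiset of points
over `F_q` is `r·q^(r+1) - (q^(r+1)-1)/(q-1) = r·q^(r+1) - Σ_{j=0}^r q^j`. -/
theorem frobenius_number_divisible (F : Type) [Field F] [Fintype F] (r : ℕ) :
    (¬ ∃ (m : ℕ) (P : Multiset (Submodule F (Fin m → F))),
        IsDivisible F r P ∧
          (Multiset.card P : ℤ) =
            (r : ℤ) * (Fintype.card F : ℤ) ^ (r + 1) -
              ∑ j ∈ Finset.range (r + 1), (Fintype.card F : ℤ) ^ j) ∧
    ∀ n : ℤ,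
      (r : ℤ) * (Fintype.card F : ℤ) ^ (r + 1) -
          (∑ j ∈ Finset.range (r + 1), (Fintype.card F : ℤ) ^ j) < n →
      ∃ (m : ℕ) (P : Multiset (Submodule F (Fin m → F))),
        IsDivisible F r P ∧ (Multiset.card P : ℤ) = n := by
  classical
  set q : ℤ := (Fintype.card F : ℤ) with hqdef
  have hq2 : 2 ≤ Fintype.card F := Fintype.one_lt_card
  have hqZ : (2:ℤ) ≤ q := by rw [hqdef]; exact_mod_cast hq2
  have hS0 : FrobDiv.S q r 0 = ∑ j ∈ Finset.range (r+1), q ^ j := by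
    rw [FrobDiv.S]
    apply Finset.sum_congr _ (fun _ _ => rfl)
    ext j; simp only [Finset.mem_Icc, Finset.mem_range]; omega
  constructor
  · rintro ⟨m, P, hdiv, hcard⟩
    have h := FrobDiv.key_nonneg r (Fin m → F) P hdiv
    rw [hcard, ← hS0, FrobDiv.L_N q hqZ r] at h
    omega
  · intro n hn
    rw [← hS0] at hn
    obtain ⟨a, ha, hL0, hexp⟩ := FrobDiv.exists_digits_of_gt q hqZ r n hn
    refine ⟨r+1, ?_⟩
    have hblocks : ∀ i ∈ Finset.range (r+1), ∃ B : Multiset (Submodule F (Fin (r+1) → F)),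
        IsDivisible F r B ∧ (Multiset.card B : ℤ) = FrobDiv.S q r i := by
      intro i hi
      have hir : i ≤ r := by have := Finset.mem_range.mp hi; omega
      obtain ⟨U, hU⟩ := FrobDiv.exists_submodule_rank (F := F) (r+1) (r+1-i) (by omega)
      obtain ⟨B, hBdiv, hBcard⟩ := FrobDiv.block_exists r i hir U hU
      refine ⟨B, hBdiv, ?_⟩
      have hgeom := FrobDiv.S_geom q r i hir
      have hcc : (q - 1) * (Multiset.card B : ℤ) = (q - 1) * FrobDiv.S q r i := by
        rw [hBcard, hgeom, hqdef]
      exact mul_left_cancel₀ (by omega) hcc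
    choose! B hBdiv hBcard using hblocks
    set c : ℕ → ℕ := fun i => if i < r then (a i).toNat else (FrobDiv.L q r n).toNat with hc
    refine ⟨∑ i ∈ Finset.range (r+1), c i • B i, ?_, ?_⟩
    · exact (FrobDiv.divisible_finsum _ _ r
        (fun i hi => FrobDiv.divisible_nsmul r (c i) (hBdiv i hi))).1
    · have hcards := (FrobDiv.divisible_finsum (Finset.range (r+1)) (fun i => c i • B i) r
        (fun i hi => FrobDiv.divisible_nsmul r (c i) (hBdiv i hi))).2
      rw [hcards, hexp]
      push_cast [Multiset.card_nsmul]
      rw [Finset.sum_range_succ]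
      have hcr : ((c r : ℕ) : ℤ) = FrobDiv.L q r n := by
        rw [hc]
        simp only [lt_irrefl, if_neg (lt_irrefl r)]
        exact Int.toNat_of_nonneg hL0
      have hSrr : FrobDiv.S q r r = q ^ r := by
        rw [FrobDiv.S, Finset.Icc_self, Finset.sum_singleton]
      have hBr : (Multiset.card (B r) : ℤ) = q ^ r := by
        rw [hBcard r (Finset.self_mem_range_succ r), hSrr]
      rw [hcr, hBr]
      congr 1
      refine Finset.sum_congr rfl fun i hi => ?_
      have hir : i < r := Finset.mem_range.mp hi
      have hci : ((c i : ℕ) : ℤ) = a i := by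
        rw [hc]
        simp only [if_pos hir]
        exact Int.toNat_of_nonneg (ha i hir).1
      rw [hci, hBcard i (Finset.mem_range.mpr (by omega))]
end

section
/- Let q ≥ 2 be an integer and r ≥ 0. The largest integer n whose S_q(r)-adic expansion has negative leading coefficient is n = Σ_{i=0}^{r−1} (q−1)·s_q(r,i) − q^r = r·q^{r+1} − (q^{r+1}−1)/(q−1). -/
lemma key_mul (q : ℕ) (r i : ℕ) (hi : i ≤ r) :
    ((q : ℤ) - 1) * ∑ j ∈ Finset.Icc i r, (q : ℤ) ^ j = (q : ℤ) ^ (r + 1) - (q : ℤ) ^ i := by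
  rw [← Finset.Ico_add_one_right_eq_Icc, mul_comm]
  exact geom_sum_Ico_mul (q : ℤ) (by omega)

/-- The largest integer whose `S_q(r)`-adic expansion has negative leading coefficient is
`n₀ = Σ_{i=0}^{r-1} (q-1)·s_q(r,i) - q^r = r·q^(r+1) - (q^(r+1)-1)/(q-1)`. -/
theorem largest_negative_leading_coefficient (q : ℕ) (hq : 2 ≤ q) (r : ℕ) :
    ((∑ i ∈ Finset.range r, ((q : ℤ) - 1) * ∑ j ∈ Finset.Icc i r, (q : ℤ) ^ j) - (q : ℤ) ^ r =
        (r : ℤ) * (q : ℤ) ^ (r + 1) - ∑ j ∈ Finset.range (r + 1), (q : ℤ) ^ j) ∧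
    (∃ a : Fin (r + 1) → ℤ,
        (∀ i : Fin (r + 1), (i : ℕ) < r → 0 ≤ a i ∧ a i ≤ (q : ℤ) - 1) ∧
        a (Fin.last r) < 0 ∧
        (∑ i ∈ Finset.range r, ((q : ℤ) - 1) * ∑ j ∈ Finset.Icc i r, (q : ℤ) ^ j) - (q : ℤ) ^ r =
          ∑ i : Fin (r + 1), a i * ∑ j ∈ Finset.Icc (i : ℕ) r, (q : ℤ) ^ j) ∧
    ∀ n : ℤ,
      (∑ i ∈ Finset.range r, ((q : ℤ) - 1) * ∑ j ∈ Finset.Icc i r, (q : ℤ) ^ j) - (q : ℤ) ^ r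
        < n →
      ∀ a : Fin (r + 1) → ℤ,
        (∀ i : Fin (r + 1), (i : ℕ) < r → 0 ≤ a i ∧ a i ≤ (q : ℤ) - 1) →
        n = ∑ i : Fin (r + 1), a i * ∑ j ∈ Finset.Icc (i : ℕ) r, (q : ℤ) ^ j →
        0 ≤ a (Fin.last r) := by
  have hIcc : Finset.Icc r r = {r} := Finset.Icc_self r
  refine ⟨?_, ?_, ?_⟩
  · rw [Finset.sum_congr rfl (fun i hi =>
      key_mul q r i (le_of_lt (Finset.mem_range.mp hi)))]
    rw [Finset.sum_sub_distrib, Finset.sum_const, Finset.card_range,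
      Finset.sum_range_succ]
    ring
  · refine ⟨fun i => if (i : ℕ) < r then (q : ℤ) - 1 else -1, ?_, ?_, ?_⟩
    · intro i hi
      simp only [if_pos hi]
      have : (2:ℤ) ≤ q := by exact_mod_cast hq
      exact ⟨by linarith, le_refl _⟩
    · simp [Fin.last]
    · rw [Fin.sum_univ_castSucc]
      simp only [Fin.coe_castSucc, Fin.val_last, lt_irrefl, if_neg (lt_irrefl r)]
      rw [Finset.sum_congr rfl (fun i (_ : i ∈ Finset.univ) =>
        by rw [if_pos i.isLt] : ∀ i ∈ Finset.univ,
          (if ((i : Fin r) : ℕ) < r then (q:ℤ)-1 else -1) * ∑ j ∈ Finset.Icc ((i:Fin r):ℕ) r, (q:ℤ)^j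
          = ((q:ℤ)-1) * ∑ j ∈ Finset.Icc ((i:Fin r):ℕ) r, (q:ℤ)^j)]
      rw [Fin.sum_univ_eq_sum_range (fun i => ((q:ℤ)-1) * ∑ j ∈ Finset.Icc i r, (q:ℤ)^j) r]
      rw [hIcc]
      simp
      ring
  · intro n hn a ha hrep
    by_contra hneg
    push_neg at hneg
    have hlast : a (Fin.last r) ≤ -1 := by omega
    have hsum : n ≤ (∑ i ∈ Finset.range r, ((q : ℤ) - 1) * ∑ j ∈ Finset.Icc i r, (q : ℤ) ^ j)
        - (q : ℤ) ^ r := by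
      rw [hrep, Fin.sum_univ_castSucc]
      have h1 : ∀ i : Fin r, a i.castSucc * ∑ j ∈ Finset.Icc ((i.castSucc : Fin (r+1)) : ℕ) r, (q:ℤ)^j
          ≤ ((q:ℤ)-1) * ∑ j ∈ Finset.Icc ((i.castSucc : Fin (r+1)) : ℕ) r, (q:ℤ)^j := by
        intro i
        apply mul_le_mul_of_nonneg_right
        · exact (ha i.castSucc (by simp [i.isLt])).2
        · positivity
      have h2 : a (Fin.last r) * ∑ j ∈ Finset.Icc ((Fin.last r : Fin (r+1)) : ℕ) r, (q:ℤ)^j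
          ≤ -(q:ℤ)^r := by
        simp only [Fin.val_last, hIcc, Finset.sum_singleton]
        calc a (Fin.last r) * (q:ℤ)^r ≤ (-1) * (q:ℤ)^r :=
              mul_le_mul_of_nonneg_right hlast (by positivity)
          _ = -(q:ℤ)^r := by ring
      have h3 : (∑ i : Fin r, a i.castSucc * ∑ j ∈ Finset.Icc ((i.castSucc : Fin (r+1)) : ℕ) r, (q:ℤ)^j)
          ≤ ∑ i : Fin r, ((q:ℤ)-1) * ∑ j ∈ Finset.Icc ((i.castSucc : Fin (r+1)) : ℕ) r, (q:ℤ)^j :=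
        Finset.sum_le_sum (fun i _ => h1 i)
      have h4 : (∑ i : Fin r, ((q:ℤ)-1) * ∑ j ∈ Finset.Icc ((i.castSucc : Fin (r+1)) : ℕ) r, (q:ℤ)^j)
          = ∑ i ∈ Finset.range r, ((q : ℤ) - 1) * ∑ j ∈ Finset.Icc i r, (q : ℤ) ^ j := by
        simp only [Fin.coe_castSucc]
        exact Fin.sum_univ_eq_sum_range (fun i => ((q:ℤ)-1) * ∑ j ∈ Finset.Icc i r, (q:ℤ)^j) r
      linarith [h3, h2, h4.le, h4.ge]
    linarith
end

section
/- Let q ≥ 2 and r ≥ 0 be integers and n ∈ ℤ. Then n can be written as Σ_{i=0}^{r} a_i·s_q(r,i) with non-negative integers a_i if and only if the leading coefficient of the unique S_q(r)-adic expansion of n is non-negative. -/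
private def Ssum (q r i : ℕ) : ℤ := ∑ j ∈ Finset.Icc i r, (q : ℤ) ^ j

private lemma Ssum_geom (q r i : ℕ) (hi : i ≤ r) :
    ((q : ℤ) - 1) * Ssum q r i = (q : ℤ) ^ (r + 1) - (q : ℤ) ^ i := by
  unfold Ssum
  rw [← Finset.Ico_add_one_right_eq_Icc, Finset.sum_Ico_eq_sub _ (by omega : i ≤ r + 1)]
  linear_combination geom_sum_mul (q : ℤ) (r + 1) - geom_sum_mul (q : ℤ) i

private lemma Ssum_carry (q r i : ℕ) (hq : 2 ≤ q) (hi : i < r) :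
    (q : ℤ) * Ssum q r i = Ssum q r (i + 1) + (q : ℤ) * Ssum q r r := by
  have hq2 : (2 : ℤ) ≤ (q : ℤ) := by exact_mod_cast hq
  have hq1 : (q : ℤ) - 1 ≠ 0 := by linarith
  apply mul_left_cancel₀ hq1
  have h0 := Ssum_geom q r i (le_of_lt hi)
  have h1 := Ssum_geom q r (i + 1) hi
  have h2 := Ssum_geom q r r le_rfl
  linear_combination (q : ℤ) * h0 - h1 - (q : ℤ) * h2

private lemma aux_reduce (q : ℕ) (hq : 2 ≤ q) (r : ℕ) :
    ∀ (N : ℕ) (a : Fin (r + 1) → ℕ),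
      (∑ j ∈ Finset.univ.filter (fun j : Fin (r + 1) => (j : ℕ) < r), a j) ≤ N →
      ∃ b : Fin (r + 1) → ℤ,
        (∀ i : Fin (r + 1), (i : ℕ) < r → 0 ≤ b i ∧ b i ≤ (q : ℤ) - 1) ∧
        0 ≤ b (Fin.last r) ∧
        (∑ i : Fin (r + 1), (a i : ℤ) * Ssum q r (i : ℕ)) =
          ∑ i : Fin (r + 1), b i * Ssum q r (i : ℕ) := by
  have hq2 : (2 : ℤ) ≤ (q : ℤ) := by exact_mod_cast hq
  intro N
  induction N with
  | zero =>
      intro a ha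
      refine ⟨fun i => (a i : ℤ), ?_, by positivity, rfl⟩
      intro i hi
      have h0 : a i = 0 := by
        have := Finset.sum_eq_zero_iff.mp (Nat.le_zero.mp ha) i (by simp [hi])
        exact this
      simp [h0]
      linarith
  | succ N ih =>
      intro a ha
      by_cases hall : ∀ i : Fin (r + 1), (i : ℕ) < r → a i < q
      · refine ⟨fun i => (a i : ℤ), ?_, by positivity, rfl⟩
        intro i hi
        have := hall i hi
        constructor
        · positivity
        · have : (a i : ℤ) < (q : ℤ) := by exact_mod_cast this
          linarith
      · push_neg at hall
        obtain ⟨i, hi, hqa⟩ := hall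
        set i1 : Fin (r + 1) := ⟨(i : ℕ) + 1, by omega⟩ with hi1def
        have hii1 : i ≠ i1 := by
          intro h
          have : (i : ℕ) = (i : ℕ) + 1 := congrArg Fin.val h
          omega
        have hil : i ≠ Fin.last r := by
          intro h
          have : (i : ℕ) = r := congrArg Fin.val h
          omega
        set a' : Fin (r + 1) → ℕ := fun j =>
          (if j = i then a j - q else a j) + (if j = i1 then 1 else 0) +
            (if j = Fin.last r then q else 0) with ha'def
        -- the sums agree
        have key : (∑ j : Fin (r + 1), (a' j : ℤ) * Ssum q r (j : ℕ)) =
            ∑ j : Fin (r + 1), (a j : ℤ) * Ssum q r (j : ℕ) := by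
          have cast_eq : ∀ j : Fin (r + 1), (a' j : ℤ) * Ssum q r (j : ℕ) =
              (a j : ℤ) * Ssum q r (j : ℕ) +
                ((if j = i then -(q : ℤ) * Ssum q r (j : ℕ) else 0) +
                  ((if j = i1 then Ssum q r (j : ℕ) else 0) +
                    (if j = Fin.last r then (q : ℤ) * Ssum q r (j : ℕ) else 0))) := by
            intro j
            by_cases hj : j = i
            · subst hj
              have hval : a' j = a j - q := by
                simp [ha'def, if_neg hii1, if_neg hil]
              have hc : ((a j - q : ℕ) : ℤ) = (a j : ℤ) - q := by
                push_cast [hqa]; ring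
              rw [hval, hc, if_pos rfl, if_neg hii1, if_neg hil]; ring
            · simp only [ha'def, if_neg hj]
              split_ifs <;> push_cast <;> ring
          rw [Finset.sum_congr rfl (fun j _ => cast_eq j)]
          rw [Finset.sum_add_distrib, Finset.sum_add_distrib, Finset.sum_add_distrib]
          rw [Finset.sum_ite_eq' Finset.univ i, Finset.sum_ite_eq' Finset.univ i1,
            Finset.sum_ite_eq' Finset.univ (Fin.last r)]
          simp only [Finset.mem_univ, if_pos]
          have hcarry := Ssum_carry q r (i : ℕ) hq hi
          simp only [Fin.val_last]
          linarith
        -- the measure decreases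
        have meas : (∑ j ∈ Finset.univ.filter (fun j : Fin (r + 1) => (j : ℕ) < r), a' j) ≤ N := by
          set s := Finset.univ.filter (fun j : Fin (r + 1) => (j : ℕ) < r) with hs
          have his : i ∈ s := by simp [hs, hi]
          have hlast_not : Fin.last r ∉ s := by simp [hs]
          have hsplit : ∑ j ∈ s, a' j =
              (∑ j ∈ s, (if j = i then a j - q else a j)) +
                (∑ j ∈ s, (if j = i1 then 1 else 0)) +
                (∑ j ∈ s, (if j = Fin.last r then q else 0)) := by
            rw [← Finset.sum_add_distrib, ← Finset.sum_add_distrib]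
          have h3 : (∑ j ∈ s, (if j = Fin.last r then q else 0)) = 0 := by
            rw [Finset.sum_ite_eq' s (Fin.last r)]
            simp [hlast_not]
          have h2 : (∑ j ∈ s, (if j = i1 then 1 else 0)) ≤ 1 := by
            rw [Finset.sum_ite_eq' s i1]
            split_ifs <;> omega
          have h1 : (∑ j ∈ s, (if j = i then a j - q else a j)) + q = ∑ j ∈ s, a j := by
            rw [← Finset.add_sum_erase s _ his, ← Finset.add_sum_erase s a his]
            have : ∑ j ∈ s.erase i, (if j = i then a j - q else a j) = ∑ j ∈ s.erase i, a j := by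
              apply Finset.sum_congr rfl
              intro j hj
              rw [if_neg (Finset.ne_of_mem_erase hj)]
            rw [if_pos rfl, this]
            omega
          omega
        obtain ⟨b, hb1, hb2, hb3⟩ := ih a' meas
        exact ⟨b, hb1, hb2, by rw [← hb3, key]⟩

/-- An integer `n` is a non-negative integral combination of the numbers `s_q(r,i)` if and
only if the leading coefficient of its unique `S_q(r)`-adic expansion is non-negative. -/
theorem nonneg_combination_iff_leading_coefficient_nonneg (q : ℕ) (hq : 2 ≤ q) (r : ℕ)
    (n : ℤ) :
    (∃ a : Fin (r + 1) → ℕ,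
        n = ∑ i : Fin (r + 1), (a i : ℤ) * ∑ j ∈ Finset.Icc (i : ℕ) r, (q : ℤ) ^ j) ↔
      ∃ a : Fin (r + 1) → ℤ,
        (∀ i : Fin (r + 1), (i : ℕ) < r → 0 ≤ a i ∧ a i ≤ (q : ℤ) - 1) ∧
        0 ≤ a (Fin.last r) ∧
        n = ∑ i : Fin (r + 1), a i * ∑ j ∈ Finset.Icc (i : ℕ) r, (q : ℤ) ^ j := by
  constructor
  · rintro ⟨a, rfl⟩
    obtain ⟨b, hb1, hb2, hb3⟩ := aux_reduce q hq r
      (∑ j ∈ Finset.univ.filter (fun j : Fin (r + 1) => (j : ℕ) < r), a j) a le_rfl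
    exact ⟨b, hb1, hb2, hb3⟩
  · rintro ⟨a, h1, h2, rfl⟩
    refine ⟨fun i => (a i).toNat, ?_⟩
    apply Finset.sum_congr rfl
    intro i _
    have hnn : 0 ≤ a i := by
      rcases lt_or_eq_of_le (Nat.lt_succ_iff.mp i.isLt) with h | h
      · exact (h1 i h).1
      · have : i = Fin.last r := Fin.ext h
        rw [this]; exact h2
    rw [Int.toNat_of_nonneg hnn]
end

section
/- Let P be a non-empty q^r-divisible multiset of points over F_q of cardinality n, and let σ be the cross sum of the S_q(r)-adic expansion of n. Then for every hyperplane H, writing #P − #(P∩H) = τ·q^r with τ ∈ ℤ, one has τ ≤ σ. Equivalently, the maximum weight of a full-length q^r-divisible linear code of length n over F_q is at most σ·q^r. -/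
open scoped Classical

open Module

def Sq (q : ℤ) (r i : ℕ) : ℤ := ∑ j ∈ Finset.Icc i r, q ^ j

lemma Sq_self (q : ℤ) (r : ℕ) : Sq q r r = q ^ r := by simp [Sq]

lemma Sq_succ (q : ℤ) (r i : ℕ) (h : i ≤ r + 1) : Sq q (r + 1) i = Sq q r i + q ^ (r + 1) := by
  unfold Sq
  rw [← Finset.sum_Icc_succ_top h]

lemma Sq_shift (q : ℤ) (r i : ℕ) : Sq q (r + 1) (i + 1) = q * Sq q r i := by
  unfold Sq
  rw [Finset.mul_sum]
  apply Finset.sum_nbij' (fun n => n - 1) (fun n => n + 1) <;>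
    simp only [Finset.mem_Icc] <;> intro a ha <;> try omega
  rw [← pow_succ']
  congr 1
  omega

lemma Sq_zero_succ (q : ℤ) (r : ℕ) : Sq q (r + 1) 0 = 1 + q * Sq q r 0 := by
  rw [← Sq_shift]
  unfold Sq
  rw [show Finset.Icc 0 (r+1) = insert 0 (Finset.Icc 1 (r+1)) by
    ext x; simp [Finset.mem_Icc]; omega]
  rw [Finset.sum_insert (by simp)]
  simp

lemma Sq_nonneg (q : ℤ) (hq : 0 ≤ q) (r i : ℕ) : 0 ≤ Sq q r i :=
  Finset.sum_nonneg fun j _ => pow_nonneg hq j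

lemma Sq_mul_sub_one (q : ℤ) (r i : ℕ) (h : i ≤ r) : Sq q r i * (q - 1) = q ^ (r + 1) - q ^ i := by
  induction r with
  | zero =>
    interval_cases i
    simp only [Sq, Finset.Icc_self, Finset.sum_singleton, pow_zero]
    ring
  | succ r ih =>
    rcases Nat.lt_or_ge i (r+1) with h' | h'
    · rw [Sq_succ q r i (by omega), add_mul, ih (by omega)]; ring
    · have : i = r + 1 := by omega
      subst this
      rw [Sq_self]; ring

/-- digits of zero are zero -/
lemma digits_of_zero (q : ℤ) (hq : 2 ≤ q) :
    ∀ (r : ℕ) (b : ℕ → ℤ), (∀ i, i < r → 0 ≤ b i ∧ b i ≤ q - 1) →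
      (∑ i ∈ Finset.range (r + 1), b i * Sq q r i) = 0 → ∀ i, i ≤ r → b i = 0 := by
  intro r
  induction r with
  | zero =>
    intro b _ hsum i hi
    interval_cases i
    simpa [Sq] using hsum
  | succ r ih =>
    intro b hb hsum
    rw [Finset.sum_range_succ' _ (r + 1)] at hsum
    have hsum' : b 0 + q * (∑ i ∈ Finset.range (r + 1), b (i + 1) * Sq q r i + b 0 * Sq q r 0) = 0 := by
      rw [← hsum]
      rw [mul_add, Finset.mul_sum, Sq_zero_succ]
      have : ∀ i ∈ Finset.range (r+1), b (i+1) * Sq q (r+1) (i+1) = q * (b (i+1) * Sq q r i) := by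
        intro i _
        rw [Sq_shift]; ring
      rw [Finset.sum_congr rfl this]
      ring
    have hq0 : b 0 = 0 := by
      have hdvd : q ∣ b 0 := ⟨-(∑ i ∈ Finset.range (r + 1), b (i + 1) * Sq q r i + b 0 * Sq q r 0), by linarith⟩
      have := hb 0 (by omega)
      rcases hdvd with ⟨c, hc⟩
      rcases lt_trichotomy c 0 with h | h | h
      · nlinarith
      · simp [hc, h]
      · nlinarith
    have hT : (∑ i ∈ Finset.range (r + 1), b (i + 1) * Sq q r i) = 0 := by
      rw [hq0] at hsum'
      simp at hsum'
      rcases hsum' with h | h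
      · omega
      · exact h
    have := ih (fun i => b (i + 1)) (fun i hi => hb (i + 1) (by omega)) hT
    intro i hi
    rcases Nat.eq_zero_or_pos i with rfl | hpos
    · exact hq0
    · have := this (i - 1) (by omega)
      simpa [Nat.sub_add_cancel hpos] using this


section mainsection
variable {F : Type} [Field F] [Fintype F] {V : Type} [AddCommGroup V] [Module F V]
  [FiniteDimensional F V] [Fintype (Submodule F V)]
set_option linter.unusedSectionVars false

/-- number of lines inside a subspace `W`, times `q-1`, is `q^dim W - 1`. -/
lemma lines_count (W : Submodule F V) :
    (Finset.univ.filter (fun L : Submodule F V => finrank F L = 1 ∧ L ≤ W)).card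
      * (Fintype.card F - 1) = Fintype.card F ^ finrank F W - 1 := by
  classical
  haveI : Finite V := Module.finite_of_finite F
  haveI : Fintype V := Fintype.ofFinite V
  set q := Fintype.card F
  set A := Finset.univ.filter (fun L : Submodule F V => finrank F L = 1 ∧ L ≤ W) with hA
  set T := Finset.univ.filter (fun w : V => w ∈ W ∧ w ≠ 0) with hT
  have hTcard : T.card = q ^ finrank F W - 1 := by
    have h1 : (Finset.univ.filter (fun w : V => w ∈ W)).card = q ^ finrank F W := by
      rw [← Fintype.card_subtype]
      exact card_eq_pow_finrank
    have h2 : T = (Finset.univ.filter (fun w : V => w ∈ W)).erase 0 := by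
      ext w
      simp [hT, and_comm]
    rw [h2, Finset.card_erase_of_mem (by simp [W.zero_mem]), h1]
  -- fibers of span
  have key : ∀ L ∈ A, (T.filter (fun w => Submodule.span F {w} = L)).card = q - 1 := by
    intro L hL
    simp only [hA, Finset.mem_filter, Finset.mem_univ, true_and] at hL
    obtain ⟨hL1, hLW⟩ := hL
    have h2 : T.filter (fun w => Submodule.span F {w} = L)
        = (Finset.univ.filter (fun w : V => w ∈ L)).erase 0 := by
      ext w
      simp only [hT, Finset.filter_filter, Finset.mem_filter, Finset.mem_univ, true_and,
        Finset.mem_erase]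
      constructor
      · rintro ⟨⟨hwW, hw0⟩, hsp⟩
        exact ⟨hw0, hsp ▸ Submodule.mem_span_singleton_self w⟩
      · rintro ⟨hw0, hwL⟩
        have hsp : Submodule.span F {w} = L := by
          apply Submodule.eq_of_le_of_finrank_eq
          · rwa [Submodule.span_singleton_le_iff_mem]
          · rw [finrank_span_singleton hw0, hL1]
        exact ⟨⟨hLW hwL, hw0⟩, hsp⟩
    have h1 : (Finset.univ.filter (fun w : V => w ∈ L)).card = q ^ finrank F L := by
      rw [← Fintype.card_subtype]
      exact card_eq_pow_finrank
    rw [h2, Finset.card_erase_of_mem (by simp [L.zero_mem]), h1, hL1, pow_one]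
  have hfib : T.card = ∑ L ∈ A, (T.filter (fun w => Submodule.span F {w} = L)).card := by
    apply Finset.card_eq_sum_card_fiberwise
    intro w hw
    simp only [hT, Finset.mem_filter, Finset.mem_univ, true_and] at hw
    simp only [hA, Finset.mem_filter, Finset.mem_univ, true_and]
    exact Finset.mem_filter.mpr ⟨Finset.mem_univ _, finrank_span_singleton (Finset.mem_filter.mp hw).2.2, by rw [Submodule.span_singleton_le_iff_mem]; exact (Finset.mem_filter.mp hw).2.1⟩
  rw [Finset.sum_congr rfl key, Finset.sum_const, smul_eq_mul] at hfib
  omega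


section part2

lemma finrank_dualAnnihilator (W : Submodule F V) :
    finrank F W.dualAnnihilator = finrank F V - finrank F W := by
  have h1 : finrank F W.dualAnnihilator + finrank F W = finrank F V := by
    rw [← LinearEquiv.finrank_eq (Subspace.quotEquivAnnihilator W)]
    exact Submodule.finrank_quotient_add_finrank W
  omega

lemma hyp_above_count [Fintype (Submodule F (Module.Dual F V))]
    (S : Submodule F V) :
    (Finset.univ.filter
        (fun K : Submodule F V => finrank F K + 1 = finrank F V ∧ S ≤ K)).card
      * (Fintype.card F - 1)
      = Fintype.card F ^ (finrank F V - finrank F S) - 1 := by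
  classical
  have hkey : (Finset.univ.filter
        (fun K : Submodule F V => finrank F K + 1 = finrank F V ∧ S ≤ K)).card
      = (Finset.univ.filter (fun L : Submodule F (Module.Dual F V) =>
          finrank F L = 1 ∧ L ≤ S.dualAnnihilator)).card := by
    apply Finset.card_bij (fun K _ => K.dualAnnihilator)
    · intro K hK
      simp only [Finset.mem_filter, Finset.mem_univ, true_and] at hK ⊢
      refine ⟨?_, Submodule.dualAnnihilator_anti hK.2⟩
      rw [finrank_dualAnnihilator]
      omega
    · intro K₁ h₁ K₂ h₂ h
      exact Subspace.dualAnnihilator_inj.mp h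
    · intro L hL
      simp only [Finset.mem_filter, Finset.mem_univ, true_and] at hL
      obtain ⟨hL1, hLS⟩ := hL
      refine ⟨L.dualCoannihilator, ?_, ?_⟩
      · simp only [Finset.mem_filter, Finset.mem_univ, true_and]
        constructor
        · have := Subspace.finrank_add_finrank_dualCoannihilator_eq L
          omega
        · conv_lhs => rw [← Subspace.dualAnnihilator_dualCoannihilator_eq (W := S)]
          intro x hx
          rw [Submodule.mem_dualCoannihilator] at hx ⊢
          exact fun φ hφ => hx φ (hLS hφ)
      · -- dualAnnihilator of dualCoannihilator = L
        have hle : L ≤ L.dualCoannihilator.dualAnnihilator := by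
          intro f hf
          rw [Submodule.mem_dualAnnihilator]
          intro w hw
          rw [Submodule.mem_dualCoannihilator] at hw
          exact hw f hf
        have hrk : finrank F L = finrank F L.dualCoannihilator.dualAnnihilator := by
          rw [finrank_dualAnnihilator]
          have := Subspace.finrank_add_finrank_dualCoannihilator_eq L
          have h2 := Submodule.finrank_le L.dualCoannihilator
          omega
        exact (Submodule.eq_of_le_of_finrank_eq hle hrk).symm
  rw [hkey]
  haveI : Finite (Module.Dual F V) := Module.finite_of_finite F
  haveI : Fintype (Module.Dual F V) := Fintype.ofFinite _
  have := lines_count (F := F) (V := Module.Dual F V) S.dualAnnihilator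
  rw [this, finrank_dualAnnihilator]

end part2

lemma finrank_bot_lt {X : Submodule F V} (hX : finrank F X = 1) (S : Submodule F V)
    (hXS : ¬ X ≤ S) : finrank F (S ⊔ X : Submodule F V) = finrank F S + 1 := by
  have hinf : finrank F (S ⊓ X : Submodule F V) = 0 := by
    by_contra h
    have hle : S ⊓ X ≤ X := inf_le_right
    have h1 : finrank F (S ⊓ X : Submodule F V) ≤ 1 := hX ▸ Submodule.finrank_mono hle
    have h2 : finrank F (S ⊓ X : Submodule F V) = 1 := by omega
    have : S ⊓ X = X := Submodule.eq_of_le_of_finrank_eq hle (by rw [h2, hX])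
    exact hXS (this ▸ inf_le_left)
  have := Submodule.finrank_sup_add_finrank_inf_eq S X
  omega

lemma hyp_above_point {S X : Submodule F V} (hS : finrank F S + 2 = finrank F V)
    (hX : finrank F X = 1) (hXS : ¬ X ≤ S) :
    Finset.univ.filter (fun K : Submodule F V =>
        (finrank F K + 1 = finrank F V ∧ S ≤ K) ∧ X ≤ K) = {S ⊔ X} := by
  have hsup : finrank F (S ⊔ X : Submodule F V) = finrank F S + 1 := finrank_bot_lt hX S hXS
  ext K
  simp only [Finset.mem_filter, Finset.mem_univ, true_and, Finset.mem_singleton]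
  constructor
  · rintro ⟨⟨hK, hSK⟩, hXK⟩
    exact (Submodule.eq_of_le_of_finrank_eq (sup_le hSK hXK) (by omega)).symm
  · rintro rfl
    exact ⟨⟨by omega, le_sup_left⟩, le_sup_right⟩

lemma sum_card_filter (A : Finset (Submodule F V)) (P : Multiset (Submodule F V)) :
    ∑ K ∈ A, Multiset.card (P.filter (fun X => X ≤ K))
      = (P.map (fun X => (A.filter (fun K => X ≤ K)).card)).sum := by
  induction P using Multiset.induction_on with
  | empty => simp
  | cons a s ih =>
    simp only [Multiset.filter_cons, Multiset.card_add, Multiset.map_cons, Multiset.sum_cons,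
      Finset.sum_add_distrib, ih]
    rw [Finset.card_filter]
    have h : ∀ K ∈ A, Multiset.card (if a ≤ K then ({a} : Multiset (Submodule F V)) else 0)
          = if a ≤ K then 1 else 0 := by
      intro K _
      by_cases h : a ≤ K <;> simp [h]
    rw [Finset.sum_congr rfl h]

lemma card_hyp_above_codim2 {S : Submodule F V} (hS : finrank F S + 2 = finrank F V)
    [Fintype (Submodule F (Module.Dual F V))] :
    (Finset.univ.filter
        (fun K : Submodule F V => finrank F K + 1 = finrank F V ∧ S ≤ K)).card
      = Fintype.card F + 1 := by
  have h := hyp_above_count (F := F) (V := V) S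
  rw [show finrank F V - finrank F S = 2 by omega] at h
  have hq : 2 ≤ Fintype.card F := Fintype.one_lt_card
  set c := (Finset.univ.filter
      (fun K : Submodule F V => finrank F K + 1 = finrank F V ∧ S ≤ K)).card
  have h2 : (Fintype.card F + 1) * (Fintype.card F - 1) = Fintype.card F ^ 2 - 1 := by
    have e1 : 1 ≤ Fintype.card F := by omega
    have e2 : 1 ≤ Fintype.card F ^ 2 := Nat.one_le_pow _ _ (by omega)
    zify [e1, e2]
    ring
  have := Nat.eq_of_mul_eq_mul_right (show 0 < Fintype.card F - 1 by omega) (h.trans h2.symm)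
  exact this

/-- sum over the `q+1` hyperplanes above a codim-2 subspace -/
lemma sum_over_hyp_codim2 {S : Submodule F V} (hS : finrank F S + 2 = finrank F V)
    [Fintype (Submodule F (Module.Dual F V))]
    (P : Multiset (Submodule F V)) (hP1 : ∀ X ∈ P, finrank F X = 1) :
    ∑ K ∈ Finset.univ.filter
        (fun K : Submodule F V => finrank F K + 1 = finrank F V ∧ S ≤ K),
      Multiset.card (P.filter (fun X => X ≤ K))
    = Fintype.card F * Multiset.card (P.filter (fun X => X ≤ S)) + Multiset.card P := by
  classical
  set q := Fintype.card F
  set A := Finset.univ.filter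
      (fun K : Submodule F V => finrank F K + 1 = finrank F V ∧ S ≤ K) with hA
  rw [sum_card_filter]
  have hmap : P.map (fun X => (A.filter (fun K => X ≤ K)).card)
      = P.map (fun X => if X ≤ S then q + 1 else 1) := by
    apply Multiset.map_congr rfl
    intro X hX
    by_cases hXS : X ≤ S
    · rw [if_pos hXS]
      have : A.filter (fun K => X ≤ K) = A := by
        apply Finset.filter_true_of_mem
        intro K hK
        simp only [hA, Finset.mem_filter, Finset.mem_univ, true_and] at hK
        exact le_trans hXS hK.2
      rw [this]
      exact card_hyp_above_codim2 hS
    · rw [if_neg hXS]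
      have : A.filter (fun K => X ≤ K) = {S ⊔ X} := by
        rw [hA, Finset.filter_filter]
        exact hyp_above_point hS (hP1 X hX) hXS
      rw [this, Finset.card_singleton]
  rw [hmap]
  have hmap2 : P.map (fun X => if X ≤ S then q + 1 else 1)
      = P.map (fun X => (if X ≤ S then q else 0) + 1) := by
    apply Multiset.map_congr rfl
    intro X _
    by_cases h : X ≤ S <;> simp [h]
  rw [hmap2]
  have haux : ∀ P' : Multiset (Submodule F V),
      (P'.map (fun X => (if X ≤ S then q else 0) + 1)).sum
        = q * Multiset.card (P'.filter (fun X => X ≤ S)) + Multiset.card P' := by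
    intro P'
    induction P' using Multiset.induction_on with
    | empty => simp
    | cons a s ih =>
      simp only [Multiset.map_cons, Multiset.sum_cons, ih, Multiset.filter_cons,
        Multiset.card_add, Multiset.card_cons]
      by_cases h : a ≤ S <;> simp [h] <;> ring
  exact haux P

section div

variable [Fintype (Submodule F (Module.Dual F V))]

lemma codim2_congr (r : ℕ) (P : Multiset (Submodule F V)) (hP : IsDivisible F (r + 1) P)
    {S : Submodule F V} (hS : finrank F S + 2 = finrank F V) :
    Multiset.card (P.filter (fun X => X ≤ S)) ≡ Multiset.card P [MOD (Fintype.card F) ^ r] := by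
  classical
  set q := Fintype.card F with hq
  set A := Finset.univ.filter
      (fun K : Submodule F V => finrank F K + 1 = finrank F V ∧ S ≤ K) with hA
  set n := Multiset.card P
  set pS := Multiset.card (P.filter (fun X => X ≤ S))
  have hsum : ∑ K ∈ A, Multiset.card (P.filter (fun X => X ≤ K)) = q * pS + n :=
    sum_over_hyp_codim2 hS P hP.1
  have hcardA : A.card = q + 1 := card_hyp_above_codim2 hS
  have hdvd : ((q : ℤ)) ^ (r + 1) ∣
      ∑ K ∈ A, ((n : ℤ) - (Multiset.card (P.filter (fun X => X ≤ K)) : ℤ)) := by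
    apply Finset.dvd_sum
    intro K hK
    simp only [hA, Finset.mem_filter, Finset.mem_univ, true_and] at hK
    have := hP.2 K hK.1
    have h2 := (Nat.modEq_iff_dvd).mp this
    exact_mod_cast h2
  have heval : ∑ K ∈ A, ((n : ℤ) - (Multiset.card (P.filter (fun X => X ≤ K)) : ℤ))
      = (q : ℤ) * ((n : ℤ) - (pS : ℤ)) := by
    rw [Finset.sum_sub_distrib, Finset.sum_const, hcardA]
    have : ∑ K ∈ A, (Multiset.card (P.filter (fun X => X ≤ K)) : ℤ) = ((q * pS + n : ℕ) : ℤ) := by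
      rw [← hsum]; push_cast; rfl
    rw [this]
    push_cast
    ring
  rw [heval, pow_succ', mul_dvd_mul_iff_left (show (q:ℤ) ≠ 0 by
    have : 2 ≤ q := Fintype.one_lt_card
    omega)] at hdvd
  exact (Nat.modEq_iff_dvd).mpr (by exact_mod_cast hdvd)

lemma restrict_divisible (r : ℕ) (P : Multiset (Submodule F V)) (hP : IsDivisible F (r + 1) P)
    {H : Submodule F V} (hH : finrank F H + 1 = finrank F V) :
    IsDivisible F r ((P.filter (fun X => X ≤ H)).map (Submodule.comap H.subtype)) := by
  classical
  constructor
  · intro Y hY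
    rw [Multiset.mem_map] at hY
    obtain ⟨X, hX, rfl⟩ := hY
    have hXH : X ≤ H := (Multiset.mem_filter.mp hX).2
    have hX1 : finrank F X = 1 := hP.1 X (Multiset.mem_filter.mp hX).1
    rw [LinearEquiv.finrank_eq (Submodule.comapSubtypeEquivOfLe hXH)]
    exact hX1
  · intro H' hH'
    set S := Submodule.map H.subtype H' with hS
    have hSrank : finrank F S = finrank F H' := Submodule.finrank_map_subtype_eq H H'
    have hScodim : finrank F S + 2 = finrank F V := by
      rw [hSrank]; omega
    have hcard1 : Multiset.card
        ((((P.filter (fun X => X ≤ H)).map (Submodule.comap H.subtype)).filter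
          (fun Y => Y ≤ H')))
        = Multiset.card (P.filter (fun X => X ≤ S)) := by
      rw [Multiset.filter_map, Multiset.card_map]
      rw [Multiset.filter_filter]
      congr 1
      apply Multiset.filter_congr
      intro X _
      simp only [Function.comp_apply]
      constructor
      · rintro ⟨hcom, hXH⟩
        have : Submodule.map H.subtype (Submodule.comap H.subtype X) = X := by
          rw [Submodule.map_comap_subtype, inf_eq_right.mpr hXH]
        calc X = Submodule.map H.subtype (Submodule.comap H.subtype X) := this.symm
        _ ≤ S := Submodule.map_mono hcom
      · intro hXS
        have hSH : S ≤ H := Submodule.map_subtype_le H H'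
        have : Submodule.comap H.subtype S = H' := by
          rw [hS, Submodule.comap_map_eq, Submodule.ker_subtype, sup_bot_eq]
        exact ⟨this ▸ Submodule.comap_mono hXS, le_trans hXS hSH⟩
    rw [hcard1, Multiset.card_map]
    have h1 : Multiset.card (P.filter (fun X => X ≤ S)) ≡ Multiset.card P
        [MOD (Fintype.card F) ^ r] := codim2_congr r P hP hScodim
    have h2 : Multiset.card (P.filter (fun X => X ≤ H)) ≡ Multiset.card P
        [MOD (Fintype.card F) ^ r] :=
      Nat.ModEq.of_dvd (pow_dvd_pow _ (by omega)) (hP.2 H hH)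
    exact h1.trans h2.symm

lemma exists_small_hyperplane (P : Multiset (Submodule F V))
    (hP1 : ∀ X ∈ P, finrank F X = 1) (hne : P ≠ 0) :
    ∃ K : Submodule F V, finrank F K + 1 = finrank F V ∧
      Fintype.card F * Multiset.card (P.filter (fun X => X ≤ K)) < Multiset.card P := by
  classical
  set q := Fintype.card F with hq
  have hq2 : 2 ≤ q := Fintype.one_lt_card
  set n := Multiset.card P with hn
  have hn0 : 0 < n := Multiset.card_pos.mpr hne
  obtain ⟨X₀, hX₀⟩ := Multiset.exists_mem_of_ne_zero hne
  have hv1 : 1 ≤ finrank F V := by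
    have := Submodule.finrank_le X₀
    rw [hP1 X₀ hX₀] at this
    omega
  set v := finrank F V with hv
  set A := Finset.univ.filter
      (fun K : Submodule F V => finrank F K + 1 = v ∧ (⊥ : Submodule F V) ≤ K) with hA
  have hcardA : A.card * (q - 1) = q ^ v - 1 := by
    have := hyp_above_count (F := F) (V := V) (⊥ : Submodule F V)
    rwa [finrank_bot, Nat.sub_zero] at this
  have hAne : A.Nonempty := by
    rw [← Finset.card_pos]
    by_contra h
    push_neg at h
    interval_cases hc : A.card
    · simp only [zero_mul] at hcardA
      have : q ≤ q ^ v := Nat.le_self_pow (by omega) q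
      omega
  have hptcount : ∀ X ∈ P, (A.filter (fun K => X ≤ K)).card * (q - 1) = q ^ (v - 1) - 1 := by
    intro X hX
    have hfil : A.filter (fun K => X ≤ K) = Finset.univ.filter
        (fun K : Submodule F V => finrank F K + 1 = v ∧ X ≤ K) := by
      rw [hA, Finset.filter_filter]
      apply Finset.filter_congr
      intro K _
      simp only [bot_le, and_true]
    rw [hfil]
    have := hyp_above_count (F := F) (V := V) X
    rwa [hP1 X hX] at this
  have hsum : (∑ K ∈ A, Multiset.card (P.filter (fun Y => Y ≤ K))) * (q - 1)
      = n * (q ^ (v - 1) - 1) := by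
    rw [sum_card_filter, ← Multiset.sum_map_mul_right]
    rw [Multiset.map_congr rfl (fun X hX => hptcount X hX)]
    simp [Multiset.map_const', hn, mul_comm]
  obtain ⟨K₀, hK₀A, hmin⟩ := Finset.exists_min_image A
    (fun K => Multiset.card (P.filter (fun Y => Y ≤ K))) hAne
  simp only [hA, Finset.mem_filter, Finset.mem_univ, true_and] at hK₀A
  refine ⟨K₀, hK₀A.1, ?_⟩
  by_contra hcon
  push_neg at hcon
  set m₀ := Multiset.card (P.filter (fun Y => Y ≤ K₀)) with hm₀
  have hm₀pos : 0 < m₀ := by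
    rcases Nat.eq_zero_or_pos m₀ with h | h
    · rw [h, mul_zero] at hcon; omega
    · exact h
  have hNsmul : A.card * m₀ ≤ ∑ K ∈ A, Multiset.card (P.filter (fun Y => Y ≤ K)) := by
    calc A.card * m₀ = ∑ _K ∈ A, m₀ := by rw [Finset.sum_const, smul_eq_mul]
    _ ≤ _ := Finset.sum_le_sum (fun K hK => hmin K (by
        simp only [hA, Finset.mem_filter, Finset.mem_univ, true_and] at hK ⊢
        exact hK))
  -- contradiction arithmetic
  have hchain : (q ^ v - 1) * m₀ ≤ n * (q ^ (v - 1) - 1) := by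
    calc (q ^ v - 1) * m₀ = A.card * (q - 1) * m₀ := by rw [hcardA]
    _ = (A.card * m₀) * (q - 1) := by ring
    _ ≤ (∑ K ∈ A, Multiset.card (P.filter (fun Y => Y ≤ K))) * (q - 1) :=
        Nat.mul_le_mul_right _ hNsmul
    _ = n * (q ^ (v - 1) - 1) := hsum
  have hqv : q ^ v = q * q ^ (v - 1) := by
    conv_lhs => rw [show v = (v - 1) + 1 by omega]
    rw [pow_succ]
    ring
  have hc1 : 1 ≤ q ^ (v - 1) := Nat.one_le_pow _ _ (by omega)
  have hc2 : 1 ≤ q ^ v := Nat.one_le_pow _ _ (by omega)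
  have hn' : n ≤ q * m₀ := hcon
  zify [hc1, hc2] at hchain
  nlinarith [hchain, hm₀pos, hc1, hc2, hq2, hqv, hn']

end div
end mainsection

section main
variable {F : Type} [Field F] [Fintype F]
open Module

lemma Sq_top_zero (q : ℤ) (r : ℕ) : Sq q r (r + 1) = 0 := by
  simp [Sq]

/-- Statement: the top digit of the `S_q(r)`-adic expansion of the cardinality of a nonempty
`q^r`-divisible multiset of points is nonnegative. -/
def TopDigitNonneg (F : Type) [Field F] [Fintype F] (r : ℕ) : Prop :=
  ∀ (V : Type) [AddCommGroup V] [Module F V] [FiniteDimensional F V]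
    (P : Multiset (Submodule F V)), IsDivisible F r P → P ≠ 0 →
    ∀ b : ℕ → ℤ, (∀ i, i < r → 0 ≤ b i ∧ b i ≤ (Fintype.card F : ℤ) - 1) →
    (Multiset.card P : ℤ) = ∑ i ∈ Finset.range (r + 1), b i * Sq (Fintype.card F : ℤ) r i →
    0 ≤ b r

lemma tau_le_sigma_of_topdigit (r : ℕ) (hA : TopDigitNonneg F r)
    (V : Type) [AddCommGroup V] [Module F V] [FiniteDimensional F V]
    (P : Multiset (Submodule F V)) (hP : IsDivisible F (r + 1) P)
    (b : ℕ → ℤ) (hb : ∀ i, i < r + 1 → 0 ≤ b i ∧ b i ≤ (Fintype.card F : ℤ) - 1)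
    (hn : (Multiset.card P : ℤ)
      = ∑ i ∈ Finset.range (r + 2), b i * Sq (Fintype.card F : ℤ) (r + 1) i)
    (H : Submodule F V) (hH : finrank F H + 1 = finrank F V)
    (τ : ℤ)
    (hτ : (Multiset.card P : ℤ) - (Multiset.card (P.filter (fun X => X ≤ H)) : ℤ)
      = τ * (Fintype.card F : ℤ) ^ (r + 1)) :
    τ ≤ ∑ i ∈ Finset.range (r + 2), b i := by
  classical
  haveI : Finite V := Module.finite_of_finite F
  haveI : Fintype V := Fintype.ofFinite V
  haveI : Finite (Submodule F V) := Finite.of_injective _ SetLike.coe_injective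
  haveI : Fintype (Submodule F V) := Fintype.ofFinite _
  haveI : Finite (Module.Dual F V) := Module.finite_of_finite F
  haveI : Finite (Submodule F (Module.Dual F V)) := Finite.of_injective _ SetLike.coe_injective
  haveI : Fintype (Submodule F (Module.Dual F V)) := Fintype.ofFinite _
  set q : ℤ := (Fintype.card F : ℤ) with hqdef
  have hq2 : (2 : ℤ) ≤ q := by
    rw [hqdef]
    exact_mod_cast (Fintype.one_lt_card : 1 < Fintype.card F)
  set σ := ∑ i ∈ Finset.range (r + 2), b i with hσ
  set n := Multiset.card P with hndef
  set m := Multiset.card (P.filter (fun X => X ≤ H)) with hmdef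
  -- rewrite n in terms of Sq at level r
  have hsplit : (n : ℤ) = (∑ i ∈ Finset.range (r + 1), b i * Sq q r i) + σ * q ^ (r + 1) := by
    rw [hn]
    have h1 : ∀ i ∈ Finset.range (r + 2), b i * Sq q (r + 1) i
        = b i * Sq q r i + b i * q ^ (r + 1) := by
      intro i hi
      rw [Finset.mem_range] at hi
      rw [Sq_succ q r i (by omega)]
      ring
    rw [Finset.sum_congr rfl h1, Finset.sum_add_distrib, ← Finset.sum_mul]
    rw [Finset.sum_range_succ (fun i => b i * Sq q r i) (r + 1), Sq_top_zero]
    ring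
  have hm : (m : ℤ) = (∑ i ∈ Finset.range (r + 1), b i * Sq q r i) + (σ - τ) * q ^ (r + 1) := by
    have : (m : ℤ) = (n : ℤ) - τ * q ^ (r + 1) := by linarith [hτ]
    rw [this, hsplit]
    ring
  -- modified digits
  set c : ℕ → ℤ := fun i => if i = r then b r + (σ - τ) * q else b i with hc
  have hcsum : (m : ℤ) = ∑ i ∈ Finset.range (r + 1), c i * Sq q r i := by
    have hsum_eq : ∑ i ∈ Finset.range (r + 1), c i * Sq q r i
        = (∑ i ∈ Finset.range r, b i * Sq q r i) + (b r + (σ - τ) * q) * q ^ r := by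
      rw [Finset.sum_range_succ]
      congr 1
      · apply Finset.sum_congr rfl
        intro i hi
        rw [Finset.mem_range] at hi
        simp [hc, if_neg (by omega : ¬ i = r)]
      · simp [hc, Sq_self]
    rw [hsum_eq, hm, Finset.sum_range_succ, Sq_self, pow_succ]
    ring
  have hcb : ∀ i, i < r → 0 ≤ c i ∧ c i ≤ q - 1 := by
    intro i hi
    rw [hc]
    simp only [if_neg (by omega : ¬ i = r)]
    exact hb i (by omega)
  have hbr := hb r (by omega)
  -- the restricted multiset
  set Q := (P.filter (fun X => X ≤ H)).map (Submodule.comap H.subtype) with hQ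
  have hQdiv : IsDivisible F r Q := restrict_divisible r P hP hH
  have hQcard : Multiset.card Q = m := by rw [hQ, Multiset.card_map]
  by_cases hQ0 : Q = 0
  · -- m = 0, all digits of 0 vanish
    have hm0 : m = 0 := by rw [← hQcard, hQ0]; rfl
    have hzero : ∑ i ∈ Finset.range (r + 1), c i * Sq q r i = 0 := by
      rw [← hcsum, hm0]; rfl
    have hzero' : b r + (σ - τ) * q = 0 := by
      simpa [hc] using digits_of_zero q hq2 r c hcb hzero r (le_refl r)
    -- b r + (σ - τ) * q = 0 with 0 ≤ b r ≤ q - 1 forces σ = τ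
    rcases lt_trichotomy (σ - τ) 0 with h | h | h
    · exfalso
      have h1 : σ - τ ≤ -1 := by omega
      have h2 : (σ - τ) * q ≤ -1 * q := mul_le_mul_of_nonneg_right h1 (by linarith)
      linarith [hbr.2, hzero']
    · omega
    · exfalso
      have h1 : (1 : ℤ) ≤ σ - τ := by omega
      have h2 : 1 * q ≤ (σ - τ) * q := mul_le_mul_of_nonneg_right h1 (by linarith)
      linarith [hbr.1, hzero']
  · -- apply the top-digit statement on the hyperplane
    have h0 : 0 ≤ b r + (σ - τ) * q := by
      simpa [hc] using hA ↥H Q hQdiv hQ0 c hcb (by rw [hQcard]; exact hcsum)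
    -- 0 ≤ b r + (σ - τ) q, b r ≤ q - 1 forces τ ≤ σ
    by_contra hcon
    push_neg at hcon
    have h1 : σ - τ ≤ -1 := by omega
    have h2 : (σ - τ) * q ≤ -1 * q := mul_le_mul_of_nonneg_right h1 (by linarith)
    linarith [hbr.2, h0]

lemma topDigitNonneg_all (r : ℕ) : TopDigitNonneg F r := by
  induction r with
  | zero =>
    intro V _ _ _ P hP hne b _ hn
    have h1 : 0 < Multiset.card P := Multiset.card_pos.mpr hne
    have h2 : Sq (Fintype.card F : ℤ) 0 0 = 1 := by simp [Sq]
    rw [Finset.sum_range_one, h2, mul_one] at hn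
    omega
  | succ r ih =>
    intro V _ _ _ P hP hne b hb hn
    classical
    haveI : Finite V := Module.finite_of_finite F
    haveI : Fintype V := Fintype.ofFinite V
    haveI : Finite (Submodule F V) := Finite.of_injective _ SetLike.coe_injective
    haveI : Fintype (Submodule F V) := Fintype.ofFinite _
    haveI : Finite (Module.Dual F V) := Module.finite_of_finite F
    haveI : Finite (Submodule F (Module.Dual F V)) := Finite.of_injective _ SetLike.coe_injective
    haveI : Fintype (Submodule F (Module.Dual F V)) := Fintype.ofFinite _
    set q : ℤ := (Fintype.card F : ℤ) with hqdef
    have hq2 : (2 : ℤ) ≤ q := by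
      rw [hqdef]
      exact_mod_cast (Fintype.one_lt_card : 1 < Fintype.card F)
    set n := Multiset.card P with hndef
    obtain ⟨K, hK, hsmall⟩ := exists_small_hyperplane P hP.1 hne
    set m := Multiset.card (P.filter (fun X => X ≤ K)) with hmdef
    -- define τ
    have hdvd : ((Fintype.card F : ℤ)) ^ (r + 1) ∣ (n : ℤ) - (m : ℤ) := by
      have h1 := (Nat.modEq_iff_dvd).mp (hP.2 K hK)
      exact_mod_cast h1
    obtain ⟨τ, hτ⟩ := hdvd
    have hτ' : (n : ℤ) - (m : ℤ) = τ * q ^ (r + 1) := by rw [hτ]; ring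
    have hτσ : τ ≤ ∑ i ∈ Finset.range (r + 2), b i :=
      tau_le_sigma_of_topdigit r ih V P hP b hb hn K hK τ hτ'
    set σ := ∑ i ∈ Finset.range (r + 2), b i with hσ
    -- strict inequality q * m < n
    have hqm : q * (m : ℤ) < (n : ℤ) := by
      rw [hqdef]
      exact_mod_cast hsmall
    -- n * (q - 1) = σ * q^(r+2) - ∑ b i q^i
    have hgeom : (n : ℤ) * (q - 1)
        = σ * q ^ (r + 2) - ∑ i ∈ Finset.range (r + 2), b i * q ^ i := by
      have h1 : ∀ i ∈ Finset.range (r + 2), b i * Sq q (r + 1) i * (q - 1)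
          = b i * q ^ (r + 2) - b i * q ^ i := by
        intro i hi
        rw [Finset.mem_range] at hi
        rw [mul_assoc, Sq_mul_sub_one q (r + 1) i (by omega)]
        ring
      rw [hn, Finset.sum_mul, Finset.sum_congr rfl h1, Finset.sum_sub_distrib,
        ← Finset.sum_mul, hσ]
    -- conclude ∑ b i q^i > 0
    have hpos : 0 < ∑ i ∈ Finset.range (r + 2), b i * q ^ i := by
      have h1 : (n : ℤ) * (q - 1) < q ^ (r + 2) * τ := by
        have hx : q * ((n : ℤ) - τ * q ^ (r + 1)) < (n : ℤ) := by
          have hmeq : (m : ℤ) = (n : ℤ) - τ * q ^ (r + 1) := by linarith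
          rw [← hmeq]; exact hqm
        have hy : q * (τ * q ^ (r + 1)) = q ^ (r + 2) * τ := by
          rw [show r + 2 = (r + 1) + 1 from rfl, pow_succ]
          ring
        nlinarith [hx, hy]
      have h2 : q ^ (r + 2) * τ ≤ q ^ (r + 2) * σ := by
        apply mul_le_mul_of_nonneg_left hτσ
        positivity
      linarith [hgeom ▸ (h1.trans_le h2)]
    -- bound lower digits
    have hbound : ∑ i ∈ Finset.range (r + 1), b i * q ^ i ≤ q ^ (r + 1) - 1 := by
      have h1 : ∑ i ∈ Finset.range (r + 1), b i * q ^ i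
          ≤ ∑ i ∈ Finset.range (r + 1), (q - 1) * q ^ i := by
        apply Finset.sum_le_sum
        intro i hi
        rw [Finset.mem_range] at hi
        have hbi := hb i (by omega)
        have hp : (0 : ℤ) ≤ q ^ i := by positivity
        exact mul_le_mul_of_nonneg_right hbi.2 hp
      have h2 : ∑ i ∈ Finset.range (r + 1), (q - 1) * q ^ i = q ^ (r + 1) - 1 := by
        have hg := geom_sum_mul q (r + 1)
        calc ∑ i ∈ Finset.range (r + 1), (q - 1) * q ^ i
            = (∑ i ∈ Finset.range (r + 1), q ^ i) * (q - 1) := by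
              rw [Finset.sum_mul]
              exact Finset.sum_congr rfl (fun i _ => mul_comm _ _)
          _ = q ^ (r + 1) - 1 := hg
      linarith [h1, h2]
    -- final
    rw [Finset.sum_range_succ] at hpos
    by_contra hcon
    push_neg at hcon
    have h3 : b (r + 1) ≤ -1 := by omega
    have h4 : b (r + 1) * q ^ (r + 1) ≤ -(q ^ (r + 1)) := by
      have hp : (0 : ℤ) < q ^ (r + 1) := by positivity
      have := mul_le_mul_of_nonneg_right h3 (le_of_lt hp)
      linarith
    linarith [hbound]

end main


/-- For a non-empty `q^r`-divisible multiset `P` of points of cardinality `n` with `S_q(r)`-adic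
expansion digits `a` (and cross sum `σ = Σ a_i`): for every hyperplane `H`, writing
`#P - #(P ∩ H) = τ·q^r`, one has `τ ≤ σ`. -/
theorem tau_le_cross_sum (F : Type) [Field F] [Fintype F] (V : Type) [AddCommGroup V]
    [Module F V] [FiniteDimensional F V] (r : ℕ)
    (P : Multiset (Submodule F V)) (hP : IsDivisible F r P) (hne : P ≠ 0)
    (a : Fin (r + 1) → ℤ)
    (ha : ∀ i : Fin (r + 1), (i : ℕ) < r → 0 ≤ a i ∧ a i ≤ (Fintype.card F : ℤ) - 1)
    (hn : (Multiset.card P : ℤ) =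
      ∑ i : Fin (r + 1), a i * ∑ j ∈ Finset.Icc (i : ℕ) r, (Fintype.card F : ℤ) ^ j)
    (H : Submodule F V) (hH : Module.finrank F ↥H + 1 = Module.finrank F V)
    (τ : ℤ)
    (hτ : (Multiset.card P : ℤ) - (Multiset.card (P.filter (fun X => X ≤ H)) : ℤ) =
      τ * (Fintype.card F : ℤ) ^ r) :
    τ ≤ ∑ i : Fin (r + 1), a i := by

  rcases r with _ | r
  · -- r = 0 : τ = n - m ≤ n = a 0
    rw [Fin.sum_univ_one] at hn ⊢
    simp only [Fin.val_zero, Finset.Icc_self, Finset.sum_singleton, pow_zero, mul_one] at hn hτ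
    have hm : (0 : ℤ) ≤ (Multiset.card (P.filter (fun X => X ≤ H)) : ℤ) := by positivity
    linarith
  · -- successor case
    set q : ℤ := (Fintype.card F : ℤ) with hqdef
    set b : ℕ → ℤ := fun j => if h : j < r + 2 then a ⟨j, h⟩ else 0 with hb
    have hbval : ∀ i : Fin (r + 2), b (i : ℕ) = a i := by
      intro i
      simp only [hb, dif_pos i.isLt, Fin.eta]
    have hconv : ∀ (f : Fin (r + 2) → ℤ → ℤ), True := fun _ => trivial
    have hsum1 : ∑ i : Fin (r + 2), a i = ∑ i ∈ Finset.range (r + 2), b i := by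
      rw [← Fin.sum_univ_eq_sum_range b (r + 2)]
      exact Finset.sum_congr rfl (fun i _ => (hbval i).symm)
    have hsum2 : (Multiset.card P : ℤ)
        = ∑ i ∈ Finset.range (r + 2), b i * Sq q (r + 1) i := by
      rw [hn, ← Fin.sum_univ_eq_sum_range (fun j => b j * Sq q (r + 1) j) (r + 2)]
      exact Finset.sum_congr rfl (fun i _ => by rw [hbval i]; rfl)
    have hbbd : ∀ i, i < r + 1 → 0 ≤ b i ∧ b i ≤ q - 1 := by
      intro i hi
      have := ha ⟨i, by omega⟩ (by simpa using hi)
      simpa [hb, dif_pos (show i < r + 2 by omega)] using this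
    rw [hsum1]
    exact tau_le_sigma_of_topdigit r (topDigitNonneg_all r) V P hP b hbbd hsum2 H hH τ hτ
end

section
/- Let q be a prime power, v, d, k with 2 ≤ k ≤ v, d even, and δ ∈ ℤ. Define m(δ) = (([v,1]_q · A_q(v−1,d;k−1)) mod [k,1]_q) + δ·[k,1]_q, where [m,1]_q = (q^m−1)/(q−1). If there exists no q^{k−1}-divisible multiset of points in F_q^v of cardinality m(δ), then A_q(v,d;k) ≤ ⌊[v,1]_q·A_q(v−1,d;k−1)/[k,1]_q⌋ − δ − 1. -/
open scoped Classical

/-- `Aq F v d k` is the maximum size of a set of `k`-dimensional subspaces of `F^v` with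
pairwise subspace distance at least `d` (a constant-dimension code). -/
noncomputable def Aq (F : Type) [Field F] [Fintype F] (v d k : ℕ) : ℕ :=
  sSup {n : ℕ | ∃ C : Finset (Submodule F (Fin v → F)),
    (∀ U ∈ C, Module.finrank F ↥U = k) ∧
    (∀ U ∈ C, ∀ W ∈ C, U ≠ W →
      d + Module.finrank F ↥U + Module.finrank F ↥W ≤ 2 * Module.finrank F ↥(U ⊔ W)) ∧
    C.card = n}

namespace IJB

open Module Finset

variable (F : Type) [Field F] [Fintype F]

noncomputable instance {v : ℕ} : Fintype (Submodule F (Fin v → F)) := Fintype.ofFinite _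

variable {v : ℕ}

/-- The set of points (1-dim subspaces) contained in `W`. -/
noncomputable def pts (W : Submodule F (Fin v → F)) : Finset (Submodule F (Fin v → F)) :=
  Finset.univ.filter (fun X => Module.finrank F ↥X = 1 ∧ X ≤ W)

lemma mem_pts {W X : Submodule F (Fin v → F)} :
    X ∈ pts F W ↔ Module.finrank F ↥X = 1 ∧ X ≤ W := by
  simp [pts]

lemma card_pts_mul (W : Submodule F (Fin v → F)) :
    (pts F W).card * (Fintype.card F - 1) = Fintype.card F ^ (finrank F ↥W) - 1 := by
  classical
  set s : Finset ↥W := Finset.univ.filter (fun x : ↥W => x ≠ 0) with hs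
  have hscard : s.card = Fintype.card F ^ (finrank F ↥W) - 1 := by
    rw [hs, Finset.filter_ne', Finset.card_erase_of_mem (Finset.mem_univ _), Finset.card_univ,
      card_eq_pow_finrank (K := F) (V := ↥W)]
  have hmap : ∀ x ∈ s, Submodule.span F {(x : Fin v → F)} ∈ pts F W := by
    intro x hx
    rw [hs, Finset.mem_filter] at hx
    have hx0 : (x : Fin v → F) ≠ 0 := by
      simpa [Submodule.coe_eq_zero] using hx.2
    rw [mem_pts]
    refine ⟨finrank_span_singleton hx0, ?_⟩
    rw [Submodule.span_le, Set.singleton_subset_iff]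
    exact x.2
  have hfiber : ∀ X ∈ pts F W,
      (s.filter (fun x : ↥W => Submodule.span F {(x : Fin v → F)} = X)).card
        = Fintype.card F - 1 := by
    intro X hX
    rw [mem_pts] at hX
    obtain ⟨hX1, hXW⟩ := hX
    have key : ∀ x : ↥W, x ≠ 0 → (Submodule.span F {(x : Fin v → F)} = X ↔
        (x : Fin v → F) ∈ X) := by
      intro x hx0
      constructor
      · intro h
        rw [← h]
        exact Submodule.mem_span_singleton_self _
      · intro h
        have hle : Submodule.span F {(x : Fin v → F)} ≤ X := by
          rw [Submodule.span_le, Set.singleton_subset_iff]; exact h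
        refine Submodule.eq_of_le_of_finrank_le hle ?_
        rw [hX1, finrank_span_singleton (by simpa [Submodule.coe_eq_zero] using hx0)]
    have htarg : (Finset.univ.filter (fun y : ↥X => y ≠ 0)).card = Fintype.card F - 1 := by
      rw [Finset.filter_ne', Finset.card_erase_of_mem (Finset.mem_univ _), Finset.card_univ,
        card_eq_pow_finrank (K := F) (V := ↥X), hX1, pow_one]
    rw [← htarg]
    refine Finset.card_bij' (fun x hx => (⟨(x : Fin v → F), by
        rw [Finset.mem_filter, hs, Finset.mem_filter] at hx
        exact (key x hx.1.2).mp hx.2⟩ : ↥X))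
      (fun y hy => (⟨(y : Fin v → F), hXW y.2⟩ : ↥W)) ?_ ?_ ?_ ?_
    · intro x hx
      rw [Finset.mem_filter, hs, Finset.mem_filter] at hx
      rw [Finset.mem_filter]
      refine ⟨Finset.mem_univ _, ?_⟩
      intro hcon
      apply hx.1.2
      apply Subtype.ext
      simpa using congrArg Subtype.val hcon
    · intro y hy
      rw [Finset.mem_filter] at hy
      have hy0 : (y : Fin v → F) ≠ 0 := by
        intro hc; exact hy.2 (Subtype.ext hc)
      rw [Finset.mem_filter]
      constructor
      · rw [hs, Finset.mem_filter]
        refine ⟨Finset.mem_univ _, ?_⟩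
        intro hc; exact hy0 (by simpa using congrArg Subtype.val hc)
      · exact (key _ (by intro hc; exact hy0 (by simpa using congrArg Subtype.val hc))).mpr y.2
    · intro x hx; apply Subtype.ext; rfl
    · intro y hy; apply Subtype.ext; rfl
  calc (pts F W).card * (Fintype.card F - 1)
      = ∑ X ∈ pts F W, (Fintype.card F - 1) := by rw [Finset.sum_const, smul_eq_mul]
    _ = ∑ X ∈ pts F W,
        (s.filter (fun x : ↥W => Submodule.span F {(x : Fin v → F)} = X)).card := by
        refine Finset.sum_congr rfl fun X hX => (hfiber X hX).symm
    _ = s.card := (Finset.card_eq_sum_card_fiberwise hmap).symm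
    _ = Fintype.card F ^ (finrank F ↥W) - 1 := hscard

lemma card_pts_int (W : Submodule F (Fin v → F)) :
    ((pts F W).card : ℤ) = ∑ j ∈ Finset.range (finrank F ↥W), (Fintype.card F : ℤ) ^ j := by
  have h2 : 1 < Fintype.card F := Fintype.one_lt_card
  have hq : (Fintype.card F : ℤ) - 1 ≠ 0 := by
    have : (1 : ℤ) < Fintype.card F := by exact_mod_cast h2
    omega
  apply mul_right_cancel₀ hq
  rw [geom_sum_mul]
  have := card_pts_mul F W
  have h1 : 1 ≤ Fintype.card F := h2.le
  have hpow : 1 ≤ Fintype.card F ^ finrank F ↥W := Nat.one_le_pow _ _ (by omega)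
  have := congrArg (fun n : ℕ => (n : ℤ)) this
  push_cast [Nat.cast_sub h1, Nat.cast_sub hpow] at this
  linarith [this]

lemma pts_filter_le (W H : Submodule F (Fin v → F)) :
    (pts F W).filter (fun X => X ≤ H) = pts F (W ⊓ H) := by
  ext X
  simp only [Finset.mem_filter, mem_pts, le_inf_iff]
  tauto

/-- The number of points of `W` outside a hyperplane `H`. -/
lemma card_off (W H : Submodule F (Fin v → F))
    (hH : finrank F ↥H + 1 = finrank F (Fin v → F)) :
    ((((pts F W).filter (fun X => ¬ X ≤ H)).card : ℤ) = 0 ∧ W ≤ H) ∨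
    ((((pts F W).filter (fun X => ¬ X ≤ H)).card : ℤ)
      = (Fintype.card F : ℤ) ^ (finrank F ↥W - 1) ∧ ¬ W ≤ H) := by
  classical
  by_cases hWH : W ≤ H
  · left
    refine ⟨?_, hWH⟩
    norm_cast
    rw [Finset.card_eq_zero, Finset.filter_eq_empty_iff]
    intro X hX
    rw [mem_pts] at hX
    simp [hX.2.trans hWH]
  · right
    refine ⟨?_, hWH⟩
    have hsup : finrank F ↥(W ⊔ H) = finrank F (Fin v → F) := by
      refine le_antisymm (Submodule.finrank_le _) ?_
      have hlt : H < W ⊔ H := by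
        refine lt_of_le_of_ne le_sup_right ?_
        intro h
        exact hWH (h ▸ le_sup_left)
      have := Submodule.finrank_lt_finrank_of_lt hlt
      omega
    have hinf : finrank F ↥(W ⊓ H) + 1 = finrank F ↥W := by
      have := Submodule.finrank_sup_add_finrank_inf_eq W H
      omega
    have hsplit : ((pts F W).filter (fun X => X ≤ H)).card
        + ((pts F W).filter (fun X => ¬ X ≤ H)).card = (pts F W).card :=
      Finset.card_filter_add_card_filter_not (fun X => X ≤ H)
    rw [pts_filter_le] at hsplit
    have h1 := card_pts_int F (W ⊓ H)
    have h2 := card_pts_int F W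
    have hstep : ((pts F W).card : ℤ) = ((pts F (W ⊓ H)).card : ℤ)
        + (Fintype.card F : ℤ) ^ (finrank F ↥W - 1) := by
      rw [h1, h2, ← hinf, Finset.sum_range_succ]
      simp
    have hcast : ((pts F (W ⊓ H)).card : ℤ)
        + (((pts F W).filter (fun X => ¬ X ≤ H)).card : ℤ) = ((pts F W).card : ℤ) := by
      exact_mod_cast hsplit
    linarith only [hstep, hcast]

lemma aq_bddAbove (v d k : ℕ) : BddAbove {n : ℕ | ∃ C : Finset (Submodule F (Fin v → F)),
    (∀ U ∈ C, Module.finrank F ↥U = k) ∧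
    (∀ U ∈ C, ∀ W ∈ C, U ≠ W →
      d + Module.finrank F ↥U + Module.finrank F ↥W ≤ 2 * Module.finrank F ↥(U ⊔ W)) ∧
    C.card = n} := by
  refine ⟨Fintype.card (Submodule F (Fin v → F)), ?_⟩
  rintro n ⟨C, -, -, rfl⟩
  simpa using Finset.card_le_univ C

lemma aq_zero_mem (v d k : ℕ) : 0 ∈ {n : ℕ | ∃ C : Finset (Submodule F (Fin v → F)),
    (∀ U ∈ C, Module.finrank F ↥U = k) ∧
    (∀ U ∈ C, ∀ W ∈ C, U ≠ W →
      d + Module.finrank F ↥U + Module.finrank F ↥W ≤ 2 * Module.finrank F ↥(U ⊔ W)) ∧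
    C.card = n} := ⟨∅, by simp, by simp, rfl⟩

lemma exists_code (v d k n : ℕ) (hn : n ≤ Aq F v d k) :
    ∃ C : Finset (Submodule F (Fin v → F)),
    (∀ U ∈ C, Module.finrank F ↥U = k) ∧
    (∀ U ∈ C, ∀ W ∈ C, U ≠ W →
      d + Module.finrank F ↥U + Module.finrank F ↥W ≤ 2 * Module.finrank F ↥(U ⊔ W)) ∧
    C.card = n := by
  obtain ⟨C', h1, h2, h3⟩ := Nat.sSup_mem ⟨0, aq_zero_mem F v d k⟩ (aq_bddAbove F v d k)
  have hn' : n ≤ C'.card := by rw [h3]; exact hn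
  obtain ⟨C, hsub, hcard⟩ := Finset.exists_subset_card_eq hn'
  exact ⟨C, fun U hU => h1 U (hsub hU),
    fun U hU W hW => h2 U (hsub hU) W (hsub hW), hcard⟩

set_option maxHeartbeats 1000000 in
set_option synthInstance.maxHeartbeats 400000 in
/-- Johnson-type bound: at most `Aq F (v-1) d (k-1)` codewords through a fixed point. -/
lemma point_le (d k : ℕ) (hv : 1 ≤ v) (C : Finset (Submodule F (Fin v → F)))
    (hCdim : ∀ U ∈ C, Module.finrank F ↥U = k)
    (hCdist : ∀ U ∈ C, ∀ W ∈ C, U ≠ W →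
      d + Module.finrank F ↥U + Module.finrank F ↥W ≤ 2 * Module.finrank F ↥(U ⊔ W))
    (X : Submodule F (Fin v → F)) (hX : Module.finrank F ↥X = 1) :
    (C.filter (fun U => X ≤ U)).card ≤ Aq F (v - 1) d (k - 1) := by
  classical
  have hfinV : finrank F (Fin v → F) = v := Module.finrank_fin_fun F
  have hquot : finrank F ((Fin v → F) ⧸ X) = v - 1 := by
    have := Submodule.finrank_quotient_add_finrank X
    omega
  obtain ⟨e⟩ : Nonempty (((Fin v → F) ⧸ X) ≃ₗ[F] (Fin (v - 1) → F)) :=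
    FiniteDimensional.nonempty_linearEquiv_of_finrank_eq
      (by rw [hquot, Module.finrank_fin_fun])
  set f : (Fin v → F) →ₗ[F] (Fin (v - 1) → F) := e.toLinearMap.comp X.mkQ with hf
  have hker : LinearMap.ker f = X := by
    rw [hf, LinearMap.ker_comp, LinearEquiv.ker, Submodule.comap_bot, Submodule.ker_mkQ]
  have hcomap : ∀ U : Submodule F (Fin v → F), X ≤ U → (U.map f).comap f = U := by
    intro U hU
    rw [Submodule.comap_map_eq, hker, sup_eq_left.mpr hU]
  have hrank : ∀ U : Submodule F (Fin v → F), X ≤ U →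
      finrank F ↥(U.map f) + 1 = finrank F ↥U := by
    intro U hU
    have h1 := LinearMap.finrank_range_add_finrank_ker (f.comp U.subtype)
    have h2 : LinearMap.range (f.comp U.subtype) = U.map f := by
      rw [LinearMap.range_comp, Submodule.range_subtype]
    have h3 : LinearMap.ker (f.comp U.subtype) = X.comap U.subtype := by
      rw [LinearMap.ker_comp, hker]
    have h4 : finrank F ↥(X.comap U.subtype) = 1 := by
      rw [LinearEquiv.finrank_eq (Submodule.comapSubtypeEquivOfLe hU), hX]
    rw [h2, h3, h4] at h1
    exact h1
  set D := C.filter (fun U => X ≤ U) with hD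
  have hXD : ∀ U ∈ D, X ≤ U := fun U hU => (Finset.mem_filter.mp hU).2
  have hinj : Set.InjOn (Submodule.map f) ↑D := by
    intro U hU W hW h
    have := congrArg (Submodule.comap f) h
    rwa [hcomap U (hXD U hU), hcomap W (hXD W hW)] at this
  set D' := D.image (Submodule.map f) with hD'
  have hcard : D'.card = D.card := Finset.card_image_of_injOn hinj
  have hmem : D'.card ∈ {n : ℕ | ∃ C : Finset (Submodule F (Fin (v - 1) → F)),
      (∀ U ∈ C, Module.finrank F ↥U = (k - 1)) ∧
      (∀ U ∈ C, ∀ W ∈ C, U ≠ W →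
        d + Module.finrank F ↥U + Module.finrank F ↥W ≤ 2 * Module.finrank F ↥(U ⊔ W)) ∧
      C.card = n} := by
    refine ⟨D', ?_, ?_, rfl⟩
    · intro U' hU'
      obtain ⟨U, hU, rfl⟩ := Finset.mem_image.mp hU'
      have hk' := hCdim U (Finset.mem_filter.mp hU).1
      have := hrank U (hXD U hU)
      omega
    · intro U' hU' W' hW' hne
      obtain ⟨U, hU, rfl⟩ := Finset.mem_image.mp hU'
      obtain ⟨W, hW, rfl⟩ := Finset.mem_image.mp hW'
      have hUW : U ≠ W := fun h => hne (h ▸ rfl)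
      have hdist := hCdist U (Finset.mem_filter.mp hU).1 W (Finset.mem_filter.mp hW).1 hUW
      have hsup : U.map f ⊔ W.map f = (U ⊔ W).map f := (Submodule.map_sup _ _ _).symm
      have hrU := hrank U (hXD U hU)
      have hrW := hrank W (hXD W hW)
      have hrUW := hrank (U ⊔ W) (le_trans (hXD U hU) le_sup_left)
      rw [hsup]
      omega
  calc D.card = D'.card := hcard.symm
    _ ≤ Aq F (v - 1) d (k - 1) := le_csSup (aq_bddAbove F (v - 1) d (k - 1)) hmem

lemma card_filter_msum {ι α : Type*} (s : Finset ι) (f : ι → Multiset α)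
    (p : α → Prop) [DecidablePred p] :
    Multiset.card ((∑ i ∈ s, f i).filter p) = ∑ i ∈ s, Multiset.card ((f i).filter p) := by
  induction s using Finset.cons_induction with
  | empty => simp
  | cons a s ha ih => simp [Finset.sum_insert ha, Multiset.filter_add, ih]

lemma card_msum {ι α : Type*} (s : Finset ι) (f : ι → Multiset α) :
    Multiset.card (∑ i ∈ s, f i) = ∑ i ∈ s, Multiset.card (f i) := by
  induction s using Finset.cons_induction with
  | empty => simp
  | cons a s ha ih => simp [Finset.sum_insert ha, ih]

lemma card_filter_nsmul_singleton {α : Type*} (n : ℕ) (x : α) (p : α → Prop) [DecidablePred p] :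
    Multiset.card ((n • ({x} : Multiset α)).filter p) = if p x then n else 0 := by
  induction n with
  | zero => simp
  | succ n ih =>
      rw [succ_nsmul, Multiset.filter_add, Multiset.card_add, ih, Multiset.filter_singleton]
      split <;> simp

end IJB

/-- Improved Johnson bound: with `m(δ)` the residue of `[v,1]_q·A_q(v-1,d;k-1)` modulo
`[k,1]_q` plus `δ·[k,1]_q`, if there is no `q^(k-1)`-divisible multiset of points in `F_q^v`
of cardinality `m(δ)`, then `A_q(v,d;k) ≤ ⌊[v,1]_q·A_q(v-1,d;k-1)/[k,1]_q⌋ - δ - 1`. -/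
theorem improved_johnson_bound (F : Type) [Field F] [Fintype F] (v d k : ℕ)
    (hk : 2 ≤ k) (hkv : k ≤ v) (hd : Even d) (δ m : ℤ)
    (hm : m = ((∑ j ∈ Finset.range v, (Fintype.card F : ℤ) ^ j) *
          (Aq F (v - 1) d (k - 1) : ℤ)) % (∑ j ∈ Finset.range k, (Fintype.card F : ℤ) ^ j) +
        δ * ∑ j ∈ Finset.range k, (Fintype.card F : ℤ) ^ j)
    (hne : ¬ ∃ P : Multiset (Submodule F (Fin v → F)),
        IsDivisible F (k - 1) P ∧ (Multiset.card P : ℤ) = m) :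
    (Aq F v d k : ℤ) ≤
      ((∑ j ∈ Finset.range v, (Fintype.card F : ℤ) ^ j) * (Aq F (v - 1) d (k - 1) : ℤ)) /
          (∑ j ∈ Finset.range k, (Fintype.card F : ℤ) ^ j) - δ - 1 := by
  classical
  by_contra hcon
  push_neg at hcon
  set Sv : ℤ := ∑ j ∈ Finset.range v, (Fintype.card F : ℤ) ^ j with hSv
  set Sk : ℤ := ∑ j ∈ Finset.range k, (Fintype.card F : ℤ) ^ j with hSkdef
  set lam : ℕ := Aq F (v - 1) d (k - 1) with hlam
  set N : ℤ := (Sv * (lam : ℤ)) / Sk - δ with hN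
  have hNle : N ≤ (Aq F v d k : ℤ) := by
    have h1 : N - 1 < (Aq F v d k : ℤ) := by
      have := hcon
      omega
    omega
  set Nc : ℕ := N.toNat with hNcdef
  have hNcle : Nc ≤ Aq F v d k := by omega
  set tn : ℕ := ((Nc : ℤ) - N).toNat with htndef
  have htn : (tn : ℤ) = (Nc : ℤ) - N := by omega
  obtain ⟨C, hCdim, hCdist, hCcard⟩ := IJB.exists_code F v d k Nc hNcle
  -- a fixed k-dimensional subspace
  obtain ⟨U0, hU0⟩ : ∃ U0 : Submodule F (Fin v → F), Module.finrank F ↥U0 = k := by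
    have hli : LinearIndependent F (fun i : Fin k => Pi.basisFun F (Fin v) (Fin.castLE hkv i)) :=
      (Pi.basisFun F (Fin v)).linearIndependent.comp (Fin.castLE hkv) (Fin.castLE_injective hkv)
    exact ⟨Submodule.span F (Set.range _),
      by rw [finrank_span_eq_card hli, Fintype.card_fin]⟩
  have hv1 : 1 ≤ v := by omega
  set c : Submodule F (Fin v → F) → ℕ := fun X => (C.filter (fun U => X ≤ U)).card with hc
  have hclam : ∀ X ∈ IJB.pts F (⊤ : Submodule F (Fin v → F)), c X ≤ lam := by
    intro X hX
    exact IJB.point_le F d k hv1 C hCdim hCdist X ((IJB.mem_pts F).mp hX).1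
  set mu : Submodule F (Fin v → F) → ℕ :=
    fun X => lam - c X + (if X ≤ U0 then tn else 0) with hmu
  set P : Multiset (Submodule F (Fin v → F)) :=
    ∑ X ∈ IJB.pts F ⊤, (mu X) • ({X} : Multiset _) with hP
  have hfinV : Module.finrank F (Fin v → F) = v := Module.finrank_fin_fun F
  have hT : Module.finrank F (⊤ : Submodule F (Fin v → F)) = v := by
    rw [finrank_top]; exact hfinV
  have hmuInt : ∀ X, c X ≤ lam →
      ((mu X : ℤ) = (lam : ℤ) - (c X : ℤ) + (if X ≤ U0 then (tn : ℤ) else 0)) := by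
    intro X hX
    simp only [hmu]
    rw [Nat.cast_add, Nat.cast_sub hX, apply_ite (fun n : ℕ => (n : ℤ))]
    norm_num
  -- general sum expansion
  have hsum : ∀ T : Finset (Submodule F (Fin v → F)), T ⊆ IJB.pts F ⊤ →
      ∑ X ∈ T, (mu X : ℤ)
        = (lam : ℤ) * T.card - (∑ U ∈ C, ((T.filter (fun X => X ≤ U)).card : ℤ))
          + (tn : ℤ) * ((T.filter (fun X => X ≤ U0)).card : ℤ) := by
    intro T hT
    have h1 : ∑ X ∈ T, (mu X : ℤ)
        = ∑ X ∈ T, ((lam : ℤ) - (c X : ℤ) + (if X ≤ U0 then (tn : ℤ) else 0)) :=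
      Finset.sum_congr rfl fun X hX => hmuInt X (hclam X (hT hX))
    rw [h1, Finset.sum_add_distrib, Finset.sum_sub_distrib]
    congr 1
    · congr 1
      · rw [Finset.sum_const, nsmul_eq_mul, mul_comm]
      · -- ∑ c X over T
        have h2 : ∀ X, (c X : ℤ) = ∑ U ∈ C, (if X ≤ U then (1 : ℤ) else 0) := by
          intro X
          simp only [hc]
          rw [Finset.card_filter]
          push_cast
          rfl
        rw [Finset.sum_congr rfl fun X _ => h2 X, Finset.sum_comm]
        refine Finset.sum_congr rfl fun U _ => ?_
        rw [Finset.sum_boole]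
    · rw [← Finset.sum_filter, Finset.sum_const, nsmul_eq_mul, mul_comm]
  -- basic cardinalities
  have hcardP : (Multiset.card P : ℤ) = ∑ X ∈ IJB.pts F ⊤, (mu X : ℤ) := by
    rw [hP, IJB.card_msum]
    push_cast
    refine Finset.sum_congr rfl fun X _ => ?_
    rw [Multiset.card_nsmul, Multiset.card_singleton, mul_one]
  have hptsU : ∀ W : Submodule F (Fin v → F),
      (IJB.pts F (⊤ : Submodule F (Fin v → F))).filter (fun X => X ≤ W) = IJB.pts F W := by
    intro W
    rw [IJB.pts_filter_le, top_inf_eq]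
  have hcardT : ((IJB.pts F (⊤ : Submodule F (Fin v → F))).card : ℤ) = Sv := by
    rw [IJB.card_pts_int, hT, hSv]
  have hcardU0 : ((IJB.pts F U0).card : ℤ) = Sk := by
    rw [IJB.card_pts_int, hU0, hSkdef]
  -- total cardinality of P equals m
  have hPm : (Multiset.card P : ℤ) = m := by
    rw [hcardP, hsum _ (Finset.Subset.refl _)]
    have h3 : ∑ U ∈ C, ((((IJB.pts F (⊤ : Submodule F (Fin v → F))).filter
        (fun X => X ≤ U)).card : ℤ)) = (Nc : ℤ) * Sk := by
      rw [Finset.sum_congr rfl fun U hU => by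
        rw [hptsU, IJB.card_pts_int, hCdim U hU]]
      rw [Finset.sum_const, nsmul_eq_mul, hCcard, hSkdef]
    rw [h3, hptsU, hcardT, hcardU0]
    have hdm := Int.mul_ediv_add_emod (Sv * (lam : ℤ)) Sk
    have hNval : (Nc : ℤ) - (tn : ℤ) = N := by omega
    rw [hm]
    rw [hN] at hNval
    linear_combination -hdm - Sk * hNval
  refine hne ⟨P, ⟨?_, ?_⟩, hPm⟩
  · -- all members are points
    intro Y hY
    rw [hP, Multiset.mem_sum] at hY
    obtain ⟨X, hX, hYX⟩ := hY
    have hYX' : Y = X := by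
      have := (Multiset.mem_nsmul.mp hYX).2
      simpa using this
    rw [hYX']
    exact ((IJB.mem_pts F).mp hX).1
  · -- divisibility
    intro H hH
    have hfle : Multiset.card (P.filter (fun X => X ≤ H)) ≤ Multiset.card P :=
      Multiset.card_le_card (Multiset.filter_le _ _)
    rw [Nat.modEq_iff_dvd' hfle]
    have hoff : ∀ W : Submodule F (Fin v → F),
        ((IJB.pts F (⊤ : Submodule F (Fin v → F))).filter (fun X => ¬ X ≤ H)).filter
          (fun X => X ≤ W)
        = (IJB.pts F W).filter (fun X => ¬ X ≤ H) := by
      intro W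
      ext X
      simp only [Finset.mem_filter, IJB.mem_pts, le_top, and_true, true_and]
      tauto
    have hdvdW : ∀ W : Submodule F (Fin v → F), k - 1 ≤ Module.finrank F ↥W - 1 →
        (Fintype.card F : ℤ) ^ (k - 1)
          ∣ (((IJB.pts F W).filter (fun X => ¬ X ≤ H)).card : ℤ) := by
      intro W hW
      rcases IJB.card_off F W H hH with ⟨h0, -⟩ | ⟨hval, -⟩
      · rw [h0]; exact dvd_zero _
      · rw [hval]
        exact pow_dvd_pow _ hW
    -- compute the difference
    set T := (IJB.pts F (⊤ : Submodule F (Fin v → F))).filter (fun X => ¬ X ≤ H) with hTdef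
    have hdiff : (Multiset.card P : ℤ) - (Multiset.card (P.filter (fun X => X ≤ H)) : ℤ)
        = ∑ X ∈ T, (mu X : ℤ) := by
      have hfc : (Multiset.card (P.filter (fun X => X ≤ H)) : ℤ)
          = ∑ X ∈ IJB.pts F (⊤ : Submodule F (Fin v → F)),
              (if X ≤ H then (mu X : ℤ) else 0) := by
        rw [hP, IJB.card_filter_msum]
        push_cast
        refine Finset.sum_congr rfl fun X _ => ?_
        rw [IJB.card_filter_nsmul_singleton, apply_ite (fun n : ℕ => (n : ℤ))]
        norm_num
      rw [hcardP, hfc, ← Finset.sum_sub_distrib, hTdef, Finset.sum_filter]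
      refine Finset.sum_congr rfl fun X _ => ?_
      split_ifs with h <;> simp [h]
    have hdvdsum : (Fintype.card F : ℤ) ^ (k - 1) ∣ ∑ X ∈ T, (mu X : ℤ) := by
      rw [hsum T (Finset.filter_subset _ _)]
      refine dvd_add (dvd_sub ?_ ?_) ?_
      · refine Dvd.dvd.mul_left ?_ _
        rw [hTdef]
        exact_mod_cast hdvdW ⊤ (by rw [hT]; omega)
      · refine Finset.dvd_sum fun U hU => ?_
        rw [hTdef, hoff]
        exact hdvdW U (by rw [hCdim U hU])
      · refine Dvd.dvd.mul_left ?_ _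
        rw [hTdef, hoff]
        exact hdvdW U0 (by rw [hU0])
    have hfin : ((Fintype.card F) ^ (k - 1) : ℤ)
        ∣ ((Multiset.card P - Multiset.card (P.filter (fun X => X ≤ H)) : ℕ) : ℤ) := by
      rw [Nat.cast_sub hfle, hdiff]
      exact_mod_cast hdvdsum
    exact_mod_cast hfin
end
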